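/- arXiv:2110.05788 — 2 statements merged into one kernel-verified Lean document; each statement's English description precedes it below -/
import Mathlib

section
/- An injective map f: S → ℤ^N on an orthohedral set S ⊆ ℤ^N is a pei-injection if and only if every orthant L of S contains a commensurable suborthant L' ⊆ L on which f is given by the restriction of an isometry onto f(L') ⊆ ℤ^N. -/
open Pointwise

namespace PeiPaper

/-- Points of the face of the standard orthant spanned by the canonical basis vectors in `Y`. -/
def stdFace (N : ℕ) (Y : Finset (Fin N)) : Set (Fin N → ℤ) :=
  {v | (∀ i, 0 ≤ v i) ∧ ∀ i, i ∉ Y → v i = 0}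

/-- Integral orthogonal matrix. -/
def IsOrthMat {N : ℕ} (A : Matrix (Fin N) (Fin N) ℤ) : Prop :=
  A * A.transpose = 1

/-- `L` is an integral orthant of rank `k` in `ℤ^N`: an affine-orthogonal image of a
rank-`k` face of the standard orthant. -/
def IsOrthantOfRank {N : ℕ} (L : Set (Fin N → ℤ)) (k : ℕ) : Prop :=
  ∃ (a : Fin N → ℤ) (A : Matrix (Fin N) (Fin N) ℤ) (Y : Finset (Fin N)),
    IsOrthMat A ∧ Y.card = k ∧ L = (fun v => a + A.mulVec v) '' stdFace N Y

def IsOrthant {N : ℕ} (L : Set (Fin N → ℤ)) : Prop := ∃ k, IsOrthantOfRank L k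

/-- `S` is orthohedral: a finite union of integral orthants. -/
def IsOrthohedral {N : ℕ} (S : Set (Fin N → ℤ)) : Prop :=
  ∃ 𝓛 : Set (Set (Fin N → ℤ)), 𝓛.Finite ∧ (∀ L ∈ 𝓛, IsOrthant L) ∧ S = ⋃₀ 𝓛

/-- The rank of a set: the maximal rank of an orthant contained in it. -/
noncomputable def orthRank {N : ℕ} (S : Set (Fin N → ℤ)) : ℕ :=
  sSup {k | ∃ L, IsOrthantOfRank L k ∧ L ⊆ S}

/-- Commensurability: the intersection is nonempty and has the same rank as both sets. -/
def Commensurable {N : ℕ} (L L' : Set (Fin N → ℤ)) : Prop :=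
  (L ∩ L').Nonempty ∧ orthRank L = orthRank (L ∩ L') ∧ orthRank L' = orthRank (L ∩ L')

/-- The rank-`k` orthants contained in `S`. -/
def germSet {N : ℕ} (S : Set (Fin N → ℤ)) (k : ℕ) : Set (Set (Fin N → ℤ)) :=
  {L | IsOrthantOfRank L k ∧ L ⊆ S}

/-- The rank-`k` germs of `S`: commensurability classes of rank-`k` orthants of `S`. -/
def Germ {N : ℕ} (S : Set (Fin N → ℤ)) (k : ℕ) : Type _ :=
  Quot (fun L L' : germSet S k => Commensurable L.1 L'.1)

def germOf {N : ℕ} (S : Set (Fin N → ℤ)) (k : ℕ) (L : germSet S k) : Germ S k :=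
  Quot.mk _ L

/-- The number of rank-`k` germs of `S` (as a natural number; `0` if infinite). -/
noncomputable def heightAt {N : ℕ} (S : Set (Fin N → ℤ)) (k : ℕ) : ℕ :=
  Nat.card (Germ S k)

/-- The height of an orthohedral set: the number of germs of maximal rank. -/
noncomputable def height {N : ℕ} (S : Set (Fin N → ℤ)) : ℕ :=
  heightAt S (orthRank S)

/-- `f` is (the restriction of) an isometry of `ℤ^N` on `L`. -/
def IsometricOn {N : ℕ} (f : (Fin N → ℤ) → (Fin N → ℤ)) (L : Set (Fin N → ℤ)) : Prop :=
  ∃ (a : Fin N → ℤ) (A : Matrix (Fin N) (Fin N) ℤ),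
    IsOrthMat A ∧ ∀ x ∈ L, f x = a + A.mulVec x

/-- `f` is (the restriction of) a translation on `L`. -/
def TranslationOn {N : ℕ} (f : (Fin N → ℤ) → (Fin N → ℤ)) (L : Set (Fin N → ℤ)) : Prop :=
  ∃ a : Fin N → ℤ, ∀ x ∈ L, f x = a + x

/-- `f` is a piecewise-Euclidean-isometric map on `S`. -/
def IsPeiMapOn {N : ℕ} (S : Set (Fin N → ℤ)) (f : (Fin N → ℤ) → (Fin N → ℤ)) : Prop :=
  ∃ 𝓛 : Set (Set (Fin N → ℤ)), 𝓛.Finite ∧ (∀ L ∈ 𝓛, IsOrthant L) ∧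
    S = ⋃₀ 𝓛 ∧ 𝓛.PairwiseDisjoint id ∧ ∀ L ∈ 𝓛, IsometricOn f L

/-- `f` is a piecewise-Euclidean-translation map on `S`. -/
def IsPetMapOn {N : ℕ} (S : Set (Fin N → ℤ)) (f : (Fin N → ℤ) → (Fin N → ℤ)) : Prop :=
  ∃ 𝓛 : Set (Set (Fin N → ℤ)), 𝓛.Finite ∧ (∀ L ∈ 𝓛, IsOrthant L) ∧
    S = ⋃₀ 𝓛 ∧ 𝓛.PairwiseDisjoint id ∧ ∀ L ∈ 𝓛, TranslationOn f L

def IsPeiIso {N : ℕ} (S S' : Set (Fin N → ℤ)) (f : (Fin N → ℤ) → (Fin N → ℤ)) : Prop :=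
  IsPeiMapOn S f ∧ Set.InjOn f S ∧ f '' S = S'

def PeiIsomorphic {N : ℕ} (S S' : Set (Fin N → ℤ)) : Prop := ∃ f, IsPeiIso S S' f

def IsPetIso {N : ℕ} (S S' : Set (Fin N → ℤ)) (f : (Fin N → ℤ) → (Fin N → ℤ)) : Prop :=
  IsPetMapOn S f ∧ Set.InjOn f S ∧ f '' S = S'

def PetIsomorphic {N : ℕ} (S S' : Set (Fin N → ℤ)) : Prop := ∃ f, IsPetIso S S' f

/-- A pei-permutation of `S`: a permutation of `ℤ^N` supported on `S` which is pei on `S`. -/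
def IsPeiPerm {N : ℕ} (S : Set (Fin N → ℤ)) (g : Equiv.Perm (Fin N → ℤ)) : Prop :=
  IsPeiMapOn S ⇑g ∧ ∀ x ∉ S, g x = x

/-- The element `g` has rank at most `k`: it is supported on an orthohedral set of rank `≤ k`. -/
def rankLE {N : ℕ} (g : Equiv.Perm (Fin N → ℤ)) (k : ℕ) : Prop :=
  ∃ T : Set (Fin N → ℤ), IsOrthohedral T ∧ orthRank T ≤ k ∧ ∀ x ∉ T, g x = x

/-- `g` fixes every rank-`k` germ of `S`. -/
def FixesGerm {N : ℕ} (S : Set (Fin N → ℤ)) (k : ℕ) (g : Equiv.Perm (Fin N → ℤ)) : Prop :=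
  ∀ L, IsOrthantOfRank L k → L ⊆ S →
    ∃ L', IsOrthantOfRank L' k ∧ L' ⊆ L ∧ Commensurable L L' ∧
      IsometricOn (⇑g) L' ∧ Commensurable (⇑g '' L') L

/-- `g` fixes every rank-`k` germ of `S` and acts on its tangent coset by a translation. -/
def TranslatesGerm {N : ℕ} (S : Set (Fin N → ℤ)) (k : ℕ) (g : Equiv.Perm (Fin N → ℤ)) : Prop :=
  ∀ L, IsOrthantOfRank L k → L ⊆ S →
    ∃ L' a, IsOrthantOfRank L' k ∧ L' ⊆ L ∧ Commensurable L L' ∧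
      (∀ x ∈ L', g x = a + x) ∧ Commensurable (⇑g '' L') L

/-- `σ` is the map induced by `g` on the rank-`k` germs of `S`. -/
def InducesGermMap {N : ℕ} (S : Set (Fin N → ℤ)) (k : ℕ) (g : Equiv.Perm (Fin N → ℤ))
    (σ : Germ S k → Germ S k) : Prop :=
  ∀ L : germSet S k, ∃ (L'' : Set (Fin N → ℤ)) (M : germSet S k),
    IsOrthantOfRank L'' k ∧ L'' ⊆ L.1 ∧ Commensurable L.1 L'' ∧
    M.1 = ⇑g '' L'' ∧ σ (germOf S k L) = germOf S k M

/-- A finitary permutation which is even (has sign `1` on a finite invariant subset). -/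
def IsEvenFinitary {α : Type*} (σ : Equiv.Perm α) : Prop :=
  ∃ (F : Finset α) (σF : Equiv.Perm F),
    (∀ a ∉ F, σ a = a) ∧ (∀ a : F, σ (a : α) = (σF a : α)) ∧
    @Equiv.Perm.sign F (Classical.decEq _) inferInstance σF = 1

/-- `g` induces an even finitary permutation on the rank-`k` germs of `S`. -/
def IsEvenOnGerms {N : ℕ} (S : Set (Fin N → ℤ)) (k : ℕ) (g : Equiv.Perm (Fin N → ℤ)) : Prop :=
  ∃ σ : Equiv.Perm (Germ S k), InducesGermMap S k g ⇑σ ∧ IsEvenFinitary σ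

/-- Ordering of germs (of arbitrary ranks): `p ≤ q` if they have representatives `L ⊆ L'`. -/
def germLE {N : ℕ} (S : Set (Fin N → ℤ)) (p q : Σ k, Germ S k) : Prop :=
  ∃ (L : germSet S p.1) (L' : germSet S q.1),
    germOf S p.1 L = p.2 ∧ germOf S q.1 L' = q.2 ∧ L.1 ⊆ L'.1

/-- A maximal germ of `S`. -/
def IsMaxGerm {N : ℕ} (S : Set (Fin N → ℤ)) (p : Σ k, Germ S k) : Prop :=
  ∀ q, germLE S p q → germLE S q p

/-- A `0`-based orthant. -/
def IsBasedOrthant {N : ℕ} (L0 : Set (Fin N → ℤ)) : Prop :=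
  ∃ (A : Matrix (Fin N) (Fin N) ℤ) (Y : Finset (Fin N)),
    IsOrthMat A ∧ L0 = (fun v => A.mulVec v) '' stdFace N Y

/-- Two (oriented) parallel orthants. -/
def ParallelOrthants {N : ℕ} (L L' : Set (Fin N → ℤ)) : Prop :=
  ∃ a : Fin N → ℤ, L' = a +ᵥ L

/-- The indicator image `S_τ` of `S`: the union of the `0`-based parallel translates of
the orthants contained in `S`. -/
def indicatorImage {N : ℕ} (S : Set (Fin N → ℤ)) : Set (Fin N → ℤ) :=
  ⋃₀ {L0 | IsBasedOrthant L0 ∧ ∃ a : Fin N → ℤ, (a +ᵥ L0) ⊆ S}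

/-- The height function `h_S`: the number of maximal germs of `S` whose indicator is `L0`. -/
noncomputable def hFun {N : ℕ} (S : Set (Fin N → ℤ)) (L0 : Set (Fin N → ℤ)) : ℕ :=
  Nat.card {p : Σ k, Germ S k //
    IsMaxGerm S p ∧ ∃ L : germSet S p.1, germOf S p.1 L = p.2 ∧ ∃ a : Fin N → ℤ, L.1 = a +ᵥ L0}

/-- `S` is quasi-normal: the maximal based orthants of `S_τ` are exactly the support of `h_S`. -/
def QuasiNormal {N : ℕ} (S : Set (Fin N → ℤ)) : Prop :=
  ∀ L0 : Set (Fin N → ℤ),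
    (IsBasedOrthant L0 ∧ L0 ⊆ indicatorImage S ∧
      ∀ L1, IsBasedOrthant L1 → L1 ⊆ indicatorImage S → L0 ⊆ L1 → L1 ⊆ L0)
    ↔ (IsBasedOrthant L0 ∧ 0 < hFun S L0)

/-- The germ `q` of `S'` is the image of the germ `p` of `S` under the injective pei-map `f`. -/
def GermMapsTo {N : ℕ} (f : (Fin N → ℤ) → (Fin N → ℤ)) (S S' : Set (Fin N → ℤ))
    (p : Σ k, Germ S k) (q : Σ k, Germ S' k) : Prop :=
  p.1 = q.1 ∧ ∃ (L : germSet S p.1) (L'' : Set (Fin N → ℤ)) (M : germSet S' q.1),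
    germOf S p.1 L = p.2 ∧ IsOrthantOfRank L'' p.1 ∧ L'' ⊆ L.1 ∧ Commensurable L.1 L'' ∧
    M.1 = f '' L'' ∧ germOf S' q.1 M = q.2

/-- A stack of `h` parallel rank-`n` orthants. -/
def IsStack {N : ℕ} (S : Set (Fin N → ℤ)) (n h : ℕ) : Prop :=
  ∃ (L0 : Set (Fin N → ℤ)) (a : Fin h → (Fin N → ℤ)),
    IsOrthantOfRank L0 n ∧
    (Pairwise fun i j => Disjoint (a i +ᵥ L0) (a j +ᵥ L0)) ∧
    S = ⋃ i, a i +ᵥ L0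

/-- A coordinate half-space of `ℤ^N`. -/
def IsHalfSpace {N : ℕ} (H : Set (Fin N → ℤ)) : Prop :=
  ∃ (i : Fin N) (c : ℤ), H = {x | x i ≤ c} ∨ H = {x | c ≤ x i}

/-- The canonical embedding `ℤ^N → ℤ^{N+1}`. -/
def emb (N : ℕ) (x : Fin N → ℤ) : Fin (N + 1) → ℤ :=
  fun i => if h : (i : ℕ) < N then x ⟨i, h⟩ else 0

/-- The sum of all matrix entries of a finitely supported family of vectors. -/
noncomputable def totalSum (k : ℕ) (Γ : Type*) : (Γ →₀ (Fin k → ℤ)) →+ ℤ :=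
  Finsupp.liftAddHom (fun _ => ∑ i : Fin k, Pi.evalAddMonoidHom (fun _ => ℤ) i)

/-- The clique (flag) complex of a graph. -/
def cliqueComplex {V : Type*} (G : SimpleGraph V) : Set (Finset V) :=
  {s | s.Nonempty ∧ G.IsClique (s : Set V)}

/-- The geometric realization of a simplicial complex on vertex set `V`. -/
def realization {V : Type*} (K : Set (Finset V)) : Set (V → ℝ) :=
  {f | (∀ v, 0 ≤ f v) ∧ ∃ s ∈ K, Function.support f ⊆ ↑s ∧ ∑ v ∈ s, f v = 1}

/-- A wedge (bouquet) of `n`-spheres indexed by `ι`, with basepoint `b`. -/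
noncomputable def wedgeSpheres (ι : Type) (n : ℕ)
    (b : Metric.sphere (0 : EuclideanSpace ℝ (Fin (n + 1))) 1) : Type :=
  Quot (fun p q : Unit ⊕ (ι × Metric.sphere (0 : EuclideanSpace ℝ (Fin (n + 1))) 1) =>
    (Sum.elim (fun _ => True) (fun pr => pr.2 = b) p) ∧
    (Sum.elim (fun _ => True) (fun qr => qr.2 = b) q))

noncomputable instance (ι : Type) (n : ℕ) (b : Metric.sphere (0 : EuclideanSpace ℝ (Fin (n + 1))) 1) :
    TopologicalSpace (wedgeSpheres ι n b) :=
  letI : TopologicalSpace ι := ⊥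
  instTopologicalSpaceQuot


variable {N : ℕ}

/-- A coordinate set of an orthant: an upward ray, a downward ray, or a singleton. -/
def IsCoord (q : Set ℤ) : Prop :=
  (∃ a, q = Set.Ici a) ∨ (∃ a, q = Set.Iic a) ∨ (∃ a, q = {a})

/-- A (possibly unbounded or empty) interval of `ℤ`. -/
def IsIv (q : Set ℤ) : Prop :=
  (∃ a b, q = Set.Icc a b) ∨ (∃ a, q = Set.Ici a) ∨ (∃ a, q = Set.Iic a)

def box (Q : Fin N → Set ℤ) : Set (Fin N → ℤ) := {x | ∀ j, x j ∈ Q j}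

lemma IsCoord.isIv {q : Set ℤ} (h : IsCoord q) : IsIv q := by
  rcases h with ⟨a, rfl⟩ | ⟨a, rfl⟩ | ⟨a, rfl⟩
  · exact Or.inr (Or.inl ⟨a, rfl⟩)
  · exact Or.inr (Or.inr ⟨a, rfl⟩)
  · exact Or.inl ⟨a, a, by simp⟩

lemma IsCoord.nonempty {q : Set ℤ} (h : IsCoord q) : q.Nonempty := by
  rcases h with ⟨a, rfl⟩ | ⟨a, rfl⟩ | ⟨a, rfl⟩ <;> exact ⟨a, by simp⟩

lemma IsCoord.infinite_cases {q : Set ℤ} (h : IsCoord q) (hq : q.Infinite) :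
    (∃ a, q = Set.Ici a) ∨ (∃ a, q = Set.Iic a) := by
  rcases h with h | h | ⟨a, rfl⟩
  · exact Or.inl h
  · exact Or.inr h
  · exact absurd (Set.finite_singleton a) hq

lemma IsIv.infinite_cases {q : Set ℤ} (h : IsIv q) (hq : q.Infinite) :
    (∃ a, q = Set.Ici a) ∨ (∃ a, q = Set.Iic a) := by
  rcases h with ⟨a, b, rfl⟩ | h | h
  · exact absurd (Set.finite_Icc a b) hq
  · exact Or.inl h
  · exact Or.inr h

lemma IsIv.infinite_isCoord {q : Set ℤ} (h : IsIv q) (hq : q.Infinite) : IsCoord q := by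
  rcases h.infinite_cases hq with h | h
  · exact Or.inl h
  · exact Or.inr (Or.inl h)

lemma isCoord_Ici (a : ℤ) : IsCoord (Set.Ici a) := Or.inl ⟨a, rfl⟩
lemma isCoord_Iic (a : ℤ) : IsCoord (Set.Iic a) := Or.inr (Or.inl ⟨a, rfl⟩)
lemma isCoord_singleton (a : ℤ) : IsCoord ({a} : Set ℤ) := Or.inr (Or.inr ⟨a, rfl⟩)

lemma Ici_infinite' (a : ℤ) : (Set.Ici a).Infinite := Set.Ici_infinite a
lemma Iic_infinite' (a : ℤ) : (Set.Iic a).Infinite := Set.Iic_infinite a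

lemma IsIv.inter {q r : Set ℤ} (h : IsIv q) (h' : IsIv r) : IsIv (q ∩ r) := by
  rcases h with ⟨a, b, rfl⟩ | ⟨a, rfl⟩ | ⟨a, rfl⟩ <;>
    rcases h' with ⟨c, d, rfl⟩ | ⟨c, rfl⟩ | ⟨c, rfl⟩
  · refine Or.inl ⟨max a c, min b d, ?_⟩
    ext t; simp only [Set.mem_inter_iff, Set.mem_Icc]; omega
  · refine Or.inl ⟨max a c, b, ?_⟩
    ext t; simp only [Set.mem_inter_iff, Set.mem_Icc, Set.mem_Ici]; omega
  · refine Or.inl ⟨a, min b c, ?_⟩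
    ext t; simp only [Set.mem_inter_iff, Set.mem_Icc, Set.mem_Iic]; omega
  · refine Or.inl ⟨max a c, d, ?_⟩
    ext t; simp only [Set.mem_inter_iff, Set.mem_Icc, Set.mem_Ici]; omega
  · refine Or.inr (Or.inl ⟨max a c, ?_⟩)
    ext t; simp only [Set.mem_inter_iff, Set.mem_Ici]; omega
  · refine Or.inl ⟨a, c, ?_⟩
    ext t; simp only [Set.mem_inter_iff, Set.mem_Icc, Set.mem_Ici, Set.mem_Iic]
  · refine Or.inl ⟨c, min a d, ?_⟩
    ext t; simp only [Set.mem_inter_iff, Set.mem_Icc, Set.mem_Iic]; omega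
  · refine Or.inl ⟨c, a, ?_⟩
    ext t; simp only [Set.mem_inter_iff, Set.mem_Icc, Set.mem_Ici, Set.mem_Iic]; omega
  · refine Or.inr (Or.inr ⟨min a c, ?_⟩)
    ext t; simp only [Set.mem_inter_iff, Set.mem_Iic]; omega

/-- The complement of a coordinate set splits into two disjoint intervals. -/
lemma IsCoord.compl_split {r : Set ℤ} (h : IsCoord r) :
    ∃ q1 q2 : Set ℤ, IsIv q1 ∧ IsIv q2 ∧ rᶜ = q1 ∪ q2 ∧ Disjoint q1 q2 := by
  rcases h with ⟨a, rfl⟩ | ⟨a, rfl⟩ | ⟨a, rfl⟩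
  · refine ⟨Set.Iic (a - 1), Set.Icc 1 0, Or.inr (Or.inr ⟨a - 1, rfl⟩), Or.inl ⟨1, 0, rfl⟩, ?_, ?_⟩
    · ext t; simp only [Set.mem_compl_iff, Set.mem_Ici, Set.mem_union, Set.mem_Iic, Set.mem_Icc]
      omega
    · rw [Set.disjoint_iff_inter_eq_empty]
      ext t; simp only [Set.mem_inter_iff, Set.mem_Iic, Set.mem_Icc, Set.mem_empty_iff_false,
        iff_false, not_and]
      omega
  · refine ⟨Set.Ici (a + 1), Set.Icc 1 0, Or.inr (Or.inl ⟨a + 1, rfl⟩), Or.inl ⟨1, 0, rfl⟩, ?_, ?_⟩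
    · ext t; simp only [Set.mem_compl_iff, Set.mem_Iic, Set.mem_union, Set.mem_Ici, Set.mem_Icc]
      omega
    · rw [Set.disjoint_iff_inter_eq_empty]
      ext t; simp only [Set.mem_inter_iff, Set.mem_Ici, Set.mem_Icc, Set.mem_empty_iff_false,
        iff_false, not_and]
      omega
  · refine ⟨Set.Iic (a - 1), Set.Ici (a + 1), Or.inr (Or.inr ⟨a - 1, rfl⟩),
      Or.inr (Or.inl ⟨a + 1, rfl⟩), ?_, ?_⟩
    · ext t
      simp only [Set.mem_compl_iff, Set.mem_singleton_iff, Set.mem_union, Set.mem_Iic, Set.mem_Ici]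
      omega
    · rw [Set.disjoint_iff_inter_eq_empty]
      ext t; simp only [Set.mem_inter_iff, Set.mem_Iic, Set.mem_Ici, Set.mem_empty_iff_false,
        iff_false, not_and]
      omega

lemma mem_box {Q : Fin N → Set ℤ} {x : Fin N → ℤ} : x ∈ box Q ↔ ∀ j, x j ∈ Q j := Iff.rfl

lemma box_nonempty {Q : Fin N → Set ℤ} (h : ∀ j, (Q j).Nonempty) : (box Q).Nonempty := by
  choose x hx using h
  exact ⟨x, hx⟩

lemma box_mono {Q R : Fin N → Set ℤ} (h : ∀ j, Q j ⊆ R j) : box Q ⊆ box R :=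
  fun x hx j => h j (hx j)

lemma update_mem_box {Q : Fin N → Set ℤ} {x : Fin N → ℤ} (hx : x ∈ box Q) {j : Fin N} {t : ℤ}
    (ht : t ∈ Q j) : Function.update x j t ∈ box Q := by
  intro i
  rcases eq_or_ne i j with rfl | hij
  · simpa using ht
  · simpa [Function.update_of_ne hij] using hx i

lemma box_subset_coords {Q R : Fin N → Set ℤ} (hne : (box Q).Nonempty) (h : box Q ⊆ box R) :
    ∀ j, Q j ⊆ R j := by
  obtain ⟨x, hx⟩ := hne
  intro j t ht
  have := h (update_mem_box hx ht) j
  simpa using this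

lemma box_disjoint_of_coord {Q R : Fin N → Set ℤ} (j : Fin N) (h : Disjoint (Q j) (R j)) :
    Disjoint (box Q) (box R) := by
  rw [Set.disjoint_left]
  intro x hx hx'
  exact (Set.disjoint_left.mp h) (hx j) (hx' j)

lemma unit_vec {n : ℕ} {a : Fin n → ℤ} (h : ∑ j, a j * a j = 1) :
    ∃ j0, (a j0 = 1 ∨ a j0 = -1) ∧ ∀ j, j ≠ j0 → a j = 0 := by
  have h0 : ∃ j0, a j0 ≠ 0 := by
    by_contra hc
    push_neg at hc
    simp [hc] at h
  obtain ⟨j0, hj0⟩ := h0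
  have h1 : 1 ≤ a j0 * a j0 := by
    have := Int.one_le_abs (by simpa using hj0)
    calc (1 : ℤ) = 1 * 1 := by ring
    _ ≤ |a j0| * |a j0| := by apply mul_le_mul this this (by norm_num) (by positivity)
    _ = a j0 * a j0 := abs_mul_abs_self _
  have hsplit : a j0 * a j0 + ∑ j ∈ Finset.univ.erase j0, a j * a j = 1 := by
    rw [Finset.add_sum_erase _ (fun j => a j * a j) (Finset.mem_univ j0)]
    exact h
  have hzero : ∀ j ∈ Finset.univ.erase j0, a j * a j = 0 := by
    rw [← Finset.sum_eq_zero_iff_of_nonneg (fun j _ => mul_self_nonneg (a j))]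
    have hge : (0:ℤ) ≤ ∑ j ∈ Finset.univ.erase j0, a j * a j :=
      Finset.sum_nonneg (fun j _ => mul_self_nonneg (a j))
    omega
  refine ⟨j0, ?_, fun j hj => ?_⟩
  · have : a j0 * a j0 = 1 := by
      have : ∑ j ∈ Finset.univ.erase j0, a j * a j = 0 :=
        Finset.sum_eq_zero hzero
      omega
    exact mul_self_eq_one_iff.mp this
  · exact mul_self_eq_zero.mp (hzero j (Finset.mem_erase.mpr ⟨hj, Finset.mem_univ j⟩))

/-- An integral orthogonal matrix is a signed permutation matrix. -/
lemma IsOrthMat.signed_perm {N : ℕ} {A : Matrix (Fin N) (Fin N) ℤ} (hA : IsOrthMat A) :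
    ∃ (σ : Equiv.Perm (Fin N)) (ε : Fin N → ℤ), (∀ i, ε i = 1 ∨ ε i = -1) ∧
      ∀ i j, A i j = if j = σ i then ε i else 0 := by
  have hrow : ∀ i, ∑ j, A i j * A i j = 1 := by
    intro i
    have := congrArg (fun M => M i i) hA
    simpa [Matrix.mul_apply, Matrix.transpose_apply, Matrix.one_apply] using this
  have hchoice : ∀ i, ∃ j0, (A i j0 = 1 ∨ A i j0 = -1) ∧ ∀ j, j ≠ j0 → A i j = 0 :=
    fun i => unit_vec (hrow i)
  choose σ0 hval hzero using hchoice
  have hinj : Function.Injective σ0 := by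
    intro i i' hii
    by_contra hne
    have hoff : ∑ j, A i j * A i' j = 0 := by
      have := congrArg (fun M => M i i') hA
      simpa [Matrix.mul_apply, Matrix.transpose_apply, Matrix.one_apply, hne] using this
    rw [Finset.sum_eq_single (σ0 i)] at hoff
    · have h2' := hval i'
      rw [← hii] at h2'
      rcases hval i with h1 | h1 <;> rcases h2' with h2 | h2 <;>
        rw [h1, h2] at hoff <;> norm_num at hoff
    · intro j _ hj
      rw [hzero i j hj, zero_mul]
    · exact fun h => absurd (Finset.mem_univ _) h
  refine ⟨Equiv.ofBijective σ0 (Finite.injective_iff_bijective.mp hinj), fun i => A i (σ0 i),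
    fun i => hval i, fun i j => ?_⟩
  simp only [Equiv.ofBijective_apply]
  by_cases hj : j = σ0 i
  · subst hj
    rw [if_pos rfl]
  · rw [hzero i j hj, if_neg hj]

noncomputable def infC {N : ℕ} (Q : Fin N → Set ℤ) : Finset (Fin N) :=
  @Finset.filter _ (fun j => (Q j).Infinite) (Classical.decPred _) Finset.univ

lemma mem_infC {Q : Fin N → Set ℤ} {j : Fin N} : j ∈ infC Q ↔ (Q j).Infinite := by
  simp [infC]

lemma mem_image_orthant {a : Fin N → ℤ} {A : Matrix (Fin N) (Fin N) ℤ} (hA : IsOrthMat A)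
    {Y : Finset (Fin N)} {x : Fin N → ℤ} :
    x ∈ (fun v => a + A.mulVec v) '' stdFace N Y ↔ A.transpose.mulVec (x - a) ∈ stdFace N Y := by
  have hA' : A * A.transpose = 1 := hA
  have hAT : A.transpose * A = 1 := mul_eq_one_comm.mp hA'
  constructor
  · rintro ⟨v, hv, rfl⟩
    have hv' : A.transpose.mulVec (a + A.mulVec v - a) = v := by
      rw [add_sub_cancel_left, Matrix.mulVec_mulVec, hAT, Matrix.one_mulVec]
    rwa [hv']
  · intro hv
    refine ⟨A.transpose.mulVec (x - a), hv, ?_⟩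
    have : A.mulVec (A.transpose.mulVec (x - a)) = x - a := by
      rw [Matrix.mulVec_mulVec, hA', Matrix.one_mulVec]
    show a + A.mulVec (A.transpose.mulVec (x - a)) = x
    rw [this]
    abel

lemma transpose_mulVec_signed {A : Matrix (Fin N) (Fin N) ℤ} {σ : Equiv.Perm (Fin N)}
    {ε : Fin N → ℤ} (hent : ∀ i j, A i j = if j = σ i then ε i else 0)
    (w : Fin N → ℤ) (i : Fin N) :
    A.transpose.mulVec w i = ε (σ.symm i) * w (σ.symm i) := by
  have key : ∀ j, A.transpose i j * w j = if j = σ.symm i then ε j * w j else 0 := by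
    intro j
    rw [Matrix.transpose_apply, hent j i]
    by_cases h : j = σ.symm i
    · subst h
      simp
    · rw [if_neg h, if_neg, zero_mul]
      intro hc
      exact h (by rw [hc, Equiv.symm_apply_apply])
  have hdef : A.transpose.mulVec w i = ∑ j, A.transpose i j * w j := rfl
  rw [hdef]
  simp only [key]
  rw [Finset.sum_ite_eq' Finset.univ (σ.symm i) (fun j => ε j * w j)]
  simp

lemma mem_stdFace_iff {Y : Finset (Fin N)} {v : Fin N → ℤ} :
    v ∈ stdFace N Y ↔ ∀ i, 0 ≤ v i ∧ (i ∉ Y → v i = 0) := by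
  constructor
  · exact fun h i => ⟨h.1 i, h.2 i⟩
  · exact fun h => ⟨fun i => (h i).1, fun i => (h i).2⟩

theorem isOrthantOfRank_iff_box {L : Set (Fin N → ℤ)} {k : ℕ} :
    IsOrthantOfRank L k ↔
      ∃ Q : Fin N → Set ℤ, (∀ j, IsCoord (Q j)) ∧ (infC Q).card = k ∧ L = box Q := by
  constructor
  · rintro ⟨a, A, Y, hA, hY, rfl⟩
    obtain ⟨σ, ε, hsign, hent⟩ := hA.signed_perm
    classical
    set Q : Fin N → Set ℤ := fun j => if σ j ∈ Y then
        (if ε j = 1 then Set.Ici (a j) else Set.Iic (a j)) else {a j} with hQdef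
    have hQc : ∀ j, IsCoord (Q j) := by
      intro j
      simp only [hQdef]
      by_cases h1 : σ j ∈ Y
      · by_cases h2 : ε j = 1
        · rw [if_pos h1, if_pos h2]; exact isCoord_Ici _
        · rw [if_pos h1, if_neg h2]; exact isCoord_Iic _
      · rw [if_neg h1]; exact isCoord_singleton _
    refine ⟨Q, hQc, ?_, ?_⟩
    · rw [← hY]
      apply Finset.card_bij (fun j _ => σ j)
      · intro j hj
        rw [mem_infC] at hj
        by_contra hc
        simp only [hQdef] at hj
        rw [if_neg hc] at hj
        exact hj (Set.finite_singleton _)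
      · intro j _ j' _ h
        exact σ.injective h
      · intro i hi
        refine ⟨σ.symm i, ?_, by simp⟩
        rw [mem_infC]
        simp only [hQdef]
        rw [Equiv.apply_symm_apply, if_pos hi]
        by_cases h2 : ε (σ.symm i) = 1
        · rw [if_pos h2]; exact Set.Ici_infinite _
        · rw [if_neg h2]; exact Set.Iic_infinite _
    · ext x
      rw [mem_image_orthant hA, mem_stdFace_iff, mem_box]
      have reindex : (∀ i, 0 ≤ A.transpose.mulVec (x - a) i ∧
          (i ∉ Y → A.transpose.mulVec (x - a) i = 0)) ↔
          ∀ j, 0 ≤ ε j * (x j - a j) ∧ (σ j ∉ Y → ε j * (x j - a j) = 0) := by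
        constructor
        · intro h j
          have := h (σ j)
          rwa [transpose_mulVec_signed hent, Equiv.symm_apply_apply, Pi.sub_apply] at this
        · intro h i
          rw [transpose_mulVec_signed hent, Pi.sub_apply]
          have := h (σ.symm i)
          rwa [Equiv.apply_symm_apply] at this
      rw [reindex]
      apply forall_congr'
      intro j
      by_cases h1 : σ j ∈ Y
      · by_cases h2 : ε j = 1
        · have hQ : Q j = Set.Ici (a j) := by simp only [hQdef]; rw [if_pos h1, if_pos h2]
          rw [hQ, Set.mem_Ici, h2]
          constructor
          · rintro ⟨h0, -⟩; omega
          · intro h; exact ⟨by omega, fun hc => absurd h1 hc⟩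
        · have h2' : ε j = -1 := (hsign j).resolve_left h2
          have hQ : Q j = Set.Iic (a j) := by simp only [hQdef]; rw [if_pos h1, if_neg h2]
          rw [hQ, Set.mem_Iic, h2']
          constructor
          · rintro ⟨h0, -⟩; omega
          · intro h; exact ⟨by omega, fun hc => absurd h1 hc⟩
      · have hQ : Q j = {a j} := by simp only [hQdef]; rw [if_neg h1]
        rw [hQ, Set.mem_singleton_iff]
        rcases hsign j with h2 | h2 <;> rw [h2] <;>
          constructor
        · rintro ⟨h0, he⟩; have := he h1; omega
        · intro h; exact ⟨by omega, fun _ => by omega⟩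
        · rintro ⟨h0, he⟩; have := he h1; omega
        · intro h; exact ⟨by omega, fun _ => by omega⟩
  · rintro ⟨Q, hQ, hcard, rfl⟩
    have hform : ∀ j, ∃ c e : ℤ, (e = 1 ∨ e = -1) ∧
        ((Q j = Set.Ici c ∧ e = 1) ∨ (Q j = Set.Iic c ∧ e = -1) ∨ (Q j = {c} ∧ e = 1)) := by
      intro j
      rcases hQ j with ⟨c, hc⟩ | ⟨c, hc⟩ | ⟨c, hc⟩
      · exact ⟨c, 1, Or.inl rfl, Or.inl ⟨hc, rfl⟩⟩
      · exact ⟨c, -1, Or.inr rfl, Or.inr (Or.inl ⟨hc, rfl⟩)⟩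
      · exact ⟨c, 1, Or.inl rfl, Or.inr (Or.inr ⟨hc, rfl⟩)⟩
    choose a ε hsign hf using hform
    have hA : IsOrthMat (Matrix.diagonal ε) := by
      show _ * _ = _
      have h1 : (fun i => ε i * ε i) = (1 : Fin N → ℤ) := by
        funext i
        show ε i * ε i = 1
        rcases hsign i with h | h <;> rw [h] <;> norm_num
      rw [Matrix.diagonal_transpose, Matrix.diagonal_mul_diagonal, h1]
      exact Matrix.diagonal_one
    refine ⟨a, Matrix.diagonal ε, infC Q, hA, hcard, ?_⟩
    ext x
    rw [mem_image_orthant hA, mem_stdFace_iff]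
    have hmv : ∀ i, (Matrix.diagonal ε).transpose.mulVec (x - a) i = ε i * (x i - a i) := by
      intro i
      rw [Matrix.diagonal_transpose, Matrix.mulVec_diagonal, Pi.sub_apply]
    constructor
    · intro h i
      have hi := h i
      rw [hmv]
      rcases hf i with ⟨h3, h4⟩ | ⟨h3, h4⟩ | ⟨h3, h4⟩ <;> rw [h3] at hi <;> rw [h4] <;>
        simp only [Set.mem_Ici, Set.mem_Iic, Set.mem_singleton_iff] at hi
      · have hmem : i ∈ infC Q := mem_infC.mpr (by rw [h3]; exact Set.Ici_infinite _)
        exact ⟨by omega, fun hc => absurd hmem hc⟩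
      · have hmem : i ∈ infC Q := mem_infC.mpr (by rw [h3]; exact Set.Iic_infinite _)
        exact ⟨by omega, fun hc => absurd hmem hc⟩
      · exact ⟨by omega, fun _ => by omega⟩
    · intro h i
      have hi := h i
      rw [hmv] at hi
      rcases hf i with ⟨h3, h4⟩ | ⟨h3, h4⟩ | ⟨h3, h4⟩ <;> rw [h3] <;> rw [h4] at hi <;>
        simp only [Set.mem_Ici, Set.mem_Iic, Set.mem_singleton_iff]
      · omega
      · omega
      · have hni : i ∉ infC Q := fun hc => (mem_infC.mp hc) (by rw [h3]; exact Set.finite_singleton _)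
        have := hi.2 hni
        omega

lemma IsOrthantOfRank.nonempty {L : Set (Fin N → ℤ)} {k : ℕ} (h : IsOrthantOfRank L k) :
    L.Nonempty := by
  obtain ⟨Q, hQ, -, rfl⟩ := isOrthantOfRank_iff_box.mp h
  exact box_nonempty (fun j => (hQ j).nonempty)

lemma IsOrthantOfRank.orthRank_eq {L : Set (Fin N → ℤ)} {k : ℕ} (h : IsOrthantOfRank L k) :
    orthRank L = k := by
  obtain ⟨Q, hQ, hcard, rfl⟩ := isOrthantOfRank_iff_box.mp h
  have hub : ∀ r ∈ {r | ∃ L'', IsOrthantOfRank L'' r ∧ L'' ⊆ box Q}, r ≤ k := by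
    rintro r ⟨L'', h'', hsub⟩
    obtain ⟨R, hR, hcardR, rfl⟩ := isOrthantOfRank_iff_box.mp h''
    have hne : (box R).Nonempty := box_nonempty (fun j => (hR j).nonempty)
    have hsubc := box_subset_coords hne hsub
    have hss : infC R ⊆ infC Q := fun j hj => mem_infC.mpr ((mem_infC.mp hj).mono (hsubc j))
    rw [← hcard, ← hcardR]
    exact Finset.card_le_card hss
  apply le_antisymm
  · exact csSup_le ⟨k, box Q, h, subset_rfl⟩ hub
  · exact le_csSup ⟨k, hub⟩ ⟨box Q, h, subset_rfl⟩

/-- A finite pairwise-disjoint decomposition of `T` into pieces satisfying `Pr`. -/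
def DecBy {N : ℕ} (Pr : Set (Fin N → ℤ) → Prop) (T : Set (Fin N → ℤ)) : Prop :=
  ∃ 𝓛 : Set (Set (Fin N → ℤ)), 𝓛.Finite ∧ (∀ L ∈ 𝓛, Pr L) ∧ ⋃₀ 𝓛 = T ∧ 𝓛.PairwiseDisjoint id

lemma DecBy.mono_pred {Pr Qr : Set (Fin N → ℤ) → Prop} (h : ∀ L, Pr L → Qr L) {T}
    (hT : DecBy Pr T) : DecBy Qr T := by
  obtain ⟨𝓛, h1, h2, h3, h4⟩ := hT
  exact ⟨𝓛, h1, fun L hL => h L (h2 L hL), h3, h4⟩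

lemma decBy_self {Pr : Set (Fin N → ℤ) → Prop} {T} (h : Pr T) : DecBy Pr T :=
  ⟨{T}, Set.finite_singleton T, fun L hL => by rw [Set.mem_singleton_iff] at hL; rwa [hL],
    Set.sUnion_singleton T, Set.pairwiseDisjoint_singleton T id⟩

lemma decBy_empty {Pr : Set (Fin N → ℤ) → Prop} : DecBy (N := N) Pr ∅ :=
  ⟨∅, Set.finite_empty, fun L hL => absurd hL (Set.notMem_empty L), Set.sUnion_empty,
    Set.pairwiseDisjoint_empty⟩

lemma DecBy.sUnion {Pr : Set (Fin N → ℤ) → Prop} {𝓟 : Set (Set (Fin N → ℤ))}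
    (h𝓟 : 𝓟.Finite) (hdisj : 𝓟.PairwiseDisjoint id) (hdec : ∀ P ∈ 𝓟, DecBy Pr P) :
    DecBy Pr (⋃₀ 𝓟) := by
  classical
  have h' : ∀ P : Set (Fin N → ℤ), ∃ 𝓛 : Set (Set (Fin N → ℤ)), 𝓛.Finite ∧
      (∀ L ∈ 𝓛, Pr L) ∧ (P ∈ 𝓟 → ⋃₀ 𝓛 = P) ∧ (P ∉ 𝓟 → 𝓛 = ∅) ∧ 𝓛.PairwiseDisjoint id := by
    intro P
    by_cases hP : P ∈ 𝓟
    · obtain ⟨𝓛, h1, h2, h3, h4⟩ := hdec P hP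
      exact ⟨𝓛, h1, h2, fun _ => h3, fun h => absurd hP h, h4⟩
    · exact ⟨∅, Set.finite_empty, fun L hL => absurd hL (Set.notMem_empty L),
        fun h => absurd h hP, fun _ => rfl, Set.pairwiseDisjoint_empty⟩
  choose F hfin hpred hunion hempty hdisjF using h'
  refine ⟨⋃ P ∈ 𝓟, F P, h𝓟.biUnion (fun P _ => hfin P), ?_, ?_, ?_⟩
  · intro L hL
    rw [Set.mem_iUnion₂] at hL
    obtain ⟨P, hP, hLP⟩ := hL
    exact hpred P L hLP
  · ext x
    constructor
    · rintro ⟨L, hL, hx⟩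
      rw [Set.mem_iUnion₂] at hL
      obtain ⟨P, hP, hLP⟩ := hL
      exact ⟨P, hP, (hunion P hP) ▸ ⟨L, hLP, hx⟩⟩
    · rintro ⟨P, hP, hx⟩
      rw [← hunion P hP] at hx
      obtain ⟨L, hL, hx⟩ := hx
      exact ⟨L, Set.mem_iUnion₂.mpr ⟨P, hP, hL⟩, hx⟩
  · intro L hL L' hL' hne
    rw [Set.mem_iUnion₂] at hL hL'
    obtain ⟨P, hP, hLP⟩ := hL
    obtain ⟨P', hP', hLP'⟩ := hL'
    by_cases hPP : P = P'
    · subst hPP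
      exact hdisjF P hLP hLP' hne
    · have hD : Disjoint P P' := hdisj hP hP' hPP
      have hsub : L ⊆ P := (hunion P hP) ▸ Set.subset_sUnion_of_mem hLP
      have hsub' : L' ⊆ P' := (hunion P' hP') ▸ Set.subset_sUnion_of_mem hLP'
      exact hD.mono hsub hsub'

/-- `L` is a generalized box: a product of intervals. -/
def PIv {N : ℕ} (L : Set (Fin N → ℤ)) : Prop :=
  ∃ Q : Fin N → Set ℤ, (∀ j, IsIv (Q j)) ∧ L = box Q

lemma isOrthant_iff_box {L : Set (Fin N → ℤ)} :
    IsOrthant L ↔ ∃ Q : Fin N → Set ℤ, (∀ j, IsCoord (Q j)) ∧ L = box Q := by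
  constructor
  · rintro ⟨k, hk⟩
    obtain ⟨Q, h1, _, h3⟩ := isOrthantOfRank_iff_box.mp hk
    exact ⟨Q, h1, h3⟩
  · rintro ⟨Q, h1, h3⟩
    exact ⟨(infC Q).card, isOrthantOfRank_iff_box.mpr ⟨Q, h1, rfl, h3⟩⟩

lemma gbox_split {Q : Fin N → Set ℤ} (hQ : ∀ j, IsIv (Q j)) : DecBy IsOrthant (box Q) := by
  classical
  by_cases hem : ∃ j, Q j = ∅
  · obtain ⟨j, hj⟩ := hem
    have hbox : box Q = ∅ := by
      rw [Set.eq_empty_iff_forall_notMem]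
      intro x hx
      have := hx j
      rw [hj] at this
      exact this
    rw [hbox]
    exact decBy_empty
  push_neg at hem
  set G : (Fin N → ℤ) → Set (Fin N → ℤ) :=
    fun c => box (fun j => if (Q j).Finite then {c j} else Q j) with hG
  have hGmem : ∀ (c x : Fin N → ℤ),
      x ∈ G c ↔ ∀ j, x j ∈ (if (Q j).Finite then ({c j} : Set ℤ) else Q j) :=
    fun c x => Iff.rfl
  set C : Set (Fin N → ℤ) := {c | ∀ j, if (Q j).Finite then c j ∈ Q j else c j = 0} with hC
  have hCfin : C.Finite := by
    have hfin : (Set.pi Set.univ fun j => if (Q j).Finite then Q j else {0}).Finite := by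
      apply Set.Finite.pi
      intro j
      by_cases h : (Q j).Finite
      · rwa [if_pos h]
      · rw [if_neg h]
        exact Set.finite_singleton 0
    apply hfin.subset
    intro c hc
    rw [Set.mem_pi]
    intro j _
    have := hc j
    by_cases h : (Q j).Finite
    · rw [if_pos h] at this ⊢
      exact this
    · rw [if_neg h] at this ⊢
      rw [this]
      rfl
  refine ⟨G '' C, hCfin.image G, ?_, ?_, ?_⟩
  · rintro L ⟨c, hc, rfl⟩
    rw [isOrthant_iff_box]
    refine ⟨_, fun j => ?_, rfl⟩
    by_cases h : (Q j).Finite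
    · rw [if_pos h]
      exact isCoord_singleton _
    · rw [if_neg h]
      exact (hQ j).infinite_isCoord h
  · ext x
    constructor
    · rintro ⟨L, ⟨c, hc, rfl⟩, hx⟩
      intro j
      have h1 := (hGmem c x).mp hx j
      have h2 := hc j
      by_cases h : (Q j).Finite
      · rw [if_pos h] at h1 h2
        rw [Set.mem_singleton_iff] at h1
        rwa [h1]
      · rwa [if_neg h] at h1
    · intro hx
      refine ⟨G (fun j => if (Q j).Finite then x j else 0),
        ⟨fun j => if (Q j).Finite then x j else 0, ?_, rfl⟩, ?_⟩
      · intro j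
        by_cases h : (Q j).Finite
        · simp only [if_pos h]
          exact hx j
        · simp only [if_neg h]
      · rw [hGmem (fun j => if (Q j).Finite then x j else 0) x]
        intro j
        by_cases h : (Q j).Finite
        · simp only [if_pos h, Set.mem_singleton_iff]
        · simp only [if_neg h]
          exact hx j
  · rintro L ⟨c, hc, rfl⟩ L' ⟨c', hc', rfl⟩ hne
    show Disjoint (G c) (G c')
    rw [Set.disjoint_left]
    intro x hx hx'
    apply hne
    have hcoords : (fun j => if (Q j).Finite then ({c j} : Set ℤ) else Q j)
        = (fun j => if (Q j).Finite then ({c' j} : Set ℤ) else Q j) := by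
      funext j
      by_cases h : (Q j).Finite
      · rw [if_pos h, if_pos h]
        have h1 := (hGmem c x).mp hx j
        have h2 := (hGmem c' x).mp hx' j
        simp only [if_pos h, Set.mem_singleton_iff] at h1 h2
        rw [← h1, ← h2]
      · rw [if_neg h, if_neg h]
    exact congrArg box hcoords

lemma box_diff {Q R : Fin N → Set ℤ} (hQ : ∀ j, IsIv (Q j)) (hR : ∀ j, IsCoord (R j)) :
    DecBy PIv (box Q \ box R) := by
  classical
  choose q1 q2 hq1 hq2 hsplit hdisjq using fun j => (hR j).compl_split
  set piece : Fin N → Bool → Set (Fin N → ℤ) := fun j b => box (fun i =>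
    if i < j then Q i ∩ R i else if i = j then Q i ∩ (if b then q1 j else q2 j) else Q i)
    with hpiece
  have hpmem : ∀ (j : Fin N) (b : Bool) (x : Fin N → ℤ), x ∈ piece j b ↔ ∀ i, x i ∈
      (if i < j then Q i ∩ R i else if i = j then Q i ∩ (if b then q1 j else q2 j) else Q i) :=
    fun j b x => Iff.rfl
  have hkey : ∀ (j : Fin N) (b : Bool) (j' : Fin N) (b' : Bool), (j, b) ≠ (j', b') →
      Disjoint (piece j b) (piece j' b') := by
    intro j b j' b' hne
    rcases lt_trichotomy j j' with hlt | heq | hgt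
    · apply box_disjoint_of_coord j
      rw [if_neg (lt_irrefl j), if_pos rfl, if_pos hlt]
      have hsub1 : Q j ∩ (if b then q1 j else q2 j) ⊆ (R j)ᶜ := by
        intro t ht
        rw [hsplit j]
        cases b
        · exact Or.inr ht.2
        · exact Or.inl ht.2
      exact Disjoint.mono hsub1 Set.inter_subset_right disjoint_compl_left
    · subst heq
      have hbb : b ≠ b' := by
        intro h
        exact hne (by rw [h])
      apply box_disjoint_of_coord j
      rw [if_neg (lt_irrefl j), if_pos rfl, if_neg (lt_irrefl j), if_pos rfl]
      cases b <;> cases b'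
      · exact absurd rfl hbb
      · exact Disjoint.mono Set.inter_subset_right Set.inter_subset_right (hdisjq j).symm
      · exact Disjoint.mono Set.inter_subset_right Set.inter_subset_right (hdisjq j)
      · exact absurd rfl hbb
    · apply box_disjoint_of_coord j'
      rw [if_neg (lt_irrefl j'), if_pos rfl, if_pos hgt]
      have hsub1 : Q j' ∩ (if b' then q1 j' else q2 j') ⊆ (R j')ᶜ := by
        intro t ht
        rw [hsplit j']
        cases b'
        · exact Or.inr ht.2
        · exact Or.inl ht.2
      exact Disjoint.mono Set.inter_subset_right hsub1 disjoint_compl_right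
  have hBsub : {L | ∃ j b, L = piece j b} ⊆
      (fun p : Fin N × Bool => piece p.1 p.2) '' Set.univ := by
    rintro L ⟨j, b, rfl⟩
    exact ⟨(j, b), Set.mem_univ _, rfl⟩
  refine ⟨{L | ∃ j b, L = piece j b}, (Set.finite_univ.image _).subset hBsub, ?_, ?_, ?_⟩
  · rintro L ⟨j, b, rfl⟩
    refine ⟨_, fun i => ?_, rfl⟩
    by_cases h1 : i < j
    · rw [if_pos h1]
      exact (hQ i).inter (hR i).isIv
    · rw [if_neg h1]
      by_cases h2 : i = j
      · rw [if_pos h2]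
        cases b
        · exact (hQ i).inter (hq2 j)
        · exact (hQ i).inter (hq1 j)
      · rw [if_neg h2]
        exact hQ i
  · ext x
    constructor
    · rintro ⟨L, ⟨j, b, rfl⟩, hx⟩
      rw [hpmem] at hx
      constructor
      · intro i
        have h1 := hx i
        by_cases hc1 : i < j
        · rw [if_pos hc1] at h1
          exact h1.1
        · rw [if_neg hc1] at h1
          by_cases hc2 : i = j
          · rw [if_pos hc2] at h1
            exact h1.1
          · rwa [if_neg hc2] at h1
      · intro hc
        have h1 := hx j
        rw [if_neg (lt_irrefl j), if_pos rfl] at h1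
        have hmem : x j ∈ (R j)ᶜ := by
          rw [hsplit j]
          cases b
          · exact Or.inr h1.2
          · exact Or.inl h1.2
        exact hmem (hc j)
    · rintro ⟨hxQ, hxR⟩
      rw [mem_box] at hxR
      push_neg at hxR
      set T : Finset (Fin N) := Finset.univ.filter (fun i => x i ∉ R i) with hT
      have hTne : T.Nonempty := by
        obtain ⟨i, hi⟩ := hxR
        exact ⟨i, Finset.mem_filter.mpr ⟨Finset.mem_univ i, hi⟩⟩
      set j := T.min' hTne with hj
      have hjmem : x j ∉ R j := (Finset.mem_filter.mp (T.min'_mem hTne)).2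
      have hjc : x j ∈ (R j)ᶜ := hjmem
      rw [hsplit j] at hjc
      have hb : ∃ b : Bool, x j ∈ (if b then q1 j else q2 j) := by
        rcases hjc with h | h
        · exact ⟨true, h⟩
        · exact ⟨false, h⟩
      obtain ⟨b, hbmem⟩ := hb
      refine ⟨piece j b, ⟨j, b, rfl⟩, ?_⟩
      rw [hpmem]
      intro i
      by_cases hc1 : i < j
      · rw [if_pos hc1]
        refine ⟨hxQ i, ?_⟩
        by_contra hnc
        have hiT : i ∈ T := Finset.mem_filter.mpr ⟨Finset.mem_univ i, hnc⟩
        exact absurd (T.min'_le i hiT) (not_le.mpr hc1)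
      · rw [if_neg hc1]
        by_cases hc2 : i = j
        · rw [if_pos hc2, hc2]
          exact ⟨hxQ j, hbmem⟩
        · rw [if_neg hc2]
          exact hxQ i
  · rintro L ⟨j, b, rfl⟩ L' ⟨j', b', rfl⟩ hne
    show Disjoint (piece j b) (piece j' b')
    apply hkey
    intro hc
    exact hne (congrArg (fun p : Fin N × Bool => piece p.1 p.2) hc)

lemma decBy_orth_of_iv {T : Set (Fin N → ℤ)} (h : DecBy PIv T) : DecBy IsOrthant T := by
  obtain ⟨𝓑, h1, h2, h3, h4⟩ := h
  rw [← h3]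
  apply DecBy.sUnion h1 h4
  intro B hB
  obtain ⟨Q, hQ, rfl⟩ := h2 B hB
  exact gbox_split hQ

lemma diff_many {Q : Fin N → Set ℤ} (hQ : ∀ j, IsIv (Q j)) {𝓟 : Set (Set (Fin N → ℤ))}
    (h𝓟 : 𝓟.Finite) (horth : ∀ P ∈ 𝓟, IsOrthant P) : DecBy PIv (box Q \ ⋃₀ 𝓟) := by
  classical
  revert horth
  refine Set.Finite.induction_on
    (motive := fun 𝓟 _ => (∀ P ∈ 𝓟, IsOrthant P) → DecBy PIv (box Q \ ⋃₀ 𝓟)) _ h𝓟 ?_ ?_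
  · intro _
    rw [Set.sUnion_empty, Set.diff_empty]
    exact decBy_self ⟨Q, hQ, rfl⟩
  · intro P 𝓟' hP h𝓟' IH horth
    have hdiff : box Q \ ⋃₀ (insert P 𝓟') = (box Q \ ⋃₀ 𝓟') \ P := by
      rw [Set.sUnion_insert, Set.diff_diff, Set.union_comm]
    rw [hdiff]
    obtain ⟨𝓑, h1, h2, h3, h4⟩ := IH (fun P' hP' => horth P' (Set.mem_insert_of_mem _ hP'))
    rw [← h3]
    have hunion : (⋃₀ 𝓑) \ P = ⋃₀ ((fun B => B \ P) '' 𝓑) := by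
      ext x
      simp only [Set.mem_diff, Set.mem_sUnion, Set.mem_image]
      constructor
      · rintro ⟨⟨B, hB, hxB⟩, hxP⟩
        exact ⟨B \ P, ⟨B, hB, rfl⟩, hxB, hxP⟩
      · rintro ⟨D, ⟨B, hB, rfl⟩, hxB, hxP⟩
        exact ⟨⟨B, hB, hxB⟩, hxP⟩
    rw [hunion]
    apply DecBy.sUnion (h1.image _)
    · rintro D ⟨B, hB, rfl⟩ D' ⟨B', hB', rfl⟩ hne
      have hBB : B ≠ B' := by
        intro h
        exact hne (by rw [h])
      exact ((h4 hB hB' hBB).mono Set.diff_subset Set.diff_subset : Disjoint (B \ P) (B' \ P))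
    · rintro D ⟨B, hB, rfl⟩
      obtain ⟨Q', hQ', rfl⟩ := h2 B hB
      obtain ⟨R, hRc, hReq⟩ := isOrthant_iff_box.mp (horth P (Set.mem_insert _ _))
      rw [hReq]
      exact box_diff hQ' hRc

lemma disjointify {𝓜 : Set (Set (Fin N → ℤ))} (h : 𝓜.Finite) (ho : ∀ M ∈ 𝓜, IsOrthant M) :
    DecBy IsOrthant (⋃₀ 𝓜) := by
  classical
  revert ho
  refine Set.Finite.induction_on
    (motive := fun 𝓜 _ => (∀ M ∈ 𝓜, IsOrthant M) → DecBy IsOrthant (⋃₀ 𝓜)) _ h ?_ ?_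
  · intro _
    rw [Set.sUnion_empty]
    exact decBy_empty
  · intro M 𝓜' hM h𝓜' IH ho
    obtain ⟨𝓟, h1, h2, h3, h4⟩ := IH (fun M' hM' => ho M' (Set.mem_insert_of_mem _ hM'))
    obtain ⟨QM, hQM, hMeq⟩ := isOrthant_iff_box.mp (ho M (Set.mem_insert _ _))
    have hD : DecBy IsOrthant (M \ ⋃₀ 𝓟) := by
      apply decBy_orth_of_iv
      rw [hMeq]
      exact diff_many (fun j => (hQM j).isIv) h1 h2
    have hfull : DecBy IsOrthant (⋃₀ (insert (M \ ⋃₀ 𝓟) 𝓟)) := by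
      apply DecBy.sUnion (h1.insert _)
      · apply Set.PairwiseDisjoint.insert h4
        intro P hP _
        rw [Set.disjoint_left]
        intro x hx hxP
        exact hx.2 ⟨P, hP, hxP⟩
      · intro P hP
        rcases Set.mem_insert_iff.mp hP with hh | hh
        · rwa [hh]
        · exact decBy_self (h2 P hh)
    rw [Set.sUnion_insert, Set.diff_union_self] at hfull
    rw [Set.sUnion_insert, ← h3]
    exact hfull

lemma IsometricOn.mono {f : (Fin N → ℤ) → (Fin N → ℤ)} {L L' : Set (Fin N → ℤ)}
    (h : IsometricOn f L) (hsub : L' ⊆ L) : IsometricOn f L' := by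
  obtain ⟨a, A, hA, hfx⟩ := h
  exact ⟨a, A, hA, fun x hx => hfx x (hsub hx)⟩

lemma main_ind {S : Set (Fin N → ℤ)} {f : (Fin N → ℤ) → (Fin N → ℤ)}
    (hRHS : ∀ L, IsOrthant L → L ⊆ S →
      ∃ L', IsOrthant L' ∧ L' ⊆ L ∧ Commensurable L L' ∧ IsometricOn f L') :
    ∀ (k : ℕ) (L : Set (Fin N → ℤ)), IsOrthantOfRank L k → L ⊆ S →
      DecBy (fun M => IsOrthant M ∧ IsometricOn f M) L := by
  classical
  intro k
  induction k using Nat.strong_induction_on with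
  | _ k IH =>
  intro L hL hLS
  obtain ⟨Q, hQc, hQcard, rfl⟩ := isOrthantOfRank_iff_box.mp hL
  obtain ⟨L', hL'orth, hL'sub, hcomm, hiso⟩ := hRHS (box Q) ⟨k, hL⟩ hLS
  obtain ⟨r, hL'r⟩ := hL'orth
  have hrk : r = k := by
    have h1 := hL'r.orthRank_eq
    have h2 := hL.orthRank_eq
    have h3 := hcomm.2.1
    have h4 := hcomm.2.2
    omega
  rw [hrk] at hL'r
  obtain ⟨Q', hQ'c, hQ'card, hL'eq⟩ := isOrthantOfRank_iff_box.mp hL'r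
  subst hL'eq
  have hne' : (box Q').Nonempty := box_nonempty (fun j => (hQ'c j).nonempty)
  have hsubc : ∀ j, Q' j ⊆ Q j := box_subset_coords hne' hL'sub
  have hinfeq : infC Q' = infC Q := by
    apply Finset.eq_of_subset_of_card_le
    · intro j hj
      exact mem_infC.mpr ((mem_infC.mp hj).mono (hsubc j))
    · rw [hQcard, hQ'card]
  have hjinf : ∀ j t, t ∈ Q j \ Q' j → (Q j).Infinite := by
    intro j t ht
    by_contra hni
    rcases hQc j with ⟨a, ha⟩ | ⟨a, ha⟩ | ⟨a, ha⟩
    · exact hni (ha ▸ Set.Ici_infinite a)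
    · exact hni (ha ▸ Set.Iic_infinite a)
    · obtain ⟨u, hu⟩ := (hQ'c j).nonempty
      have h1 : u = a := by
        have := hsubc j hu
        rwa [ha, Set.mem_singleton_iff] at this
      have h2 : t = a := by
        have := ht.1
        rwa [ha, Set.mem_singleton_iff] at this
      rw [← h1] at h2
      exact ht.2 (h2 ▸ hu)
  have hDfin : ∀ j, (Q j \ Q' j).Finite := by
    intro j
    by_cases hinf : (Q j).Infinite
    · have hinf' : (Q' j).Infinite := mem_infC.mp (hinfeq ▸ (mem_infC.mpr hinf))
      rcases (hQc j).infinite_cases hinf with ⟨a, ha⟩ | ⟨a, ha⟩ <;>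
        rcases (hQ'c j).infinite_cases hinf' with ⟨a', ha'⟩ | ⟨a', ha'⟩
      · apply (Set.finite_Icc a (a' - 1)).subset
        intro t ht
        have h1 := ht.1
        have h2 := ht.2
        rw [ha, Set.mem_Ici] at h1
        rw [ha', Set.mem_Ici] at h2
        rw [Set.mem_Icc]
        omega
      · exfalso
        have := hsubc j (show min a' (a - 1) ∈ Q' j by rw [ha', Set.mem_Iic]; omega)
        rw [ha, Set.mem_Ici] at this
        omega
      · exfalso
        have := hsubc j (show max a' (a + 1) ∈ Q' j by rw [ha', Set.mem_Ici]; omega)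
        rw [ha, Set.mem_Iic] at this
        omega
      · apply (Set.finite_Icc (a' + 1) a).subset
        intro t ht
        have h1 := ht.1
        have h2 := ht.2
        rw [ha, Set.mem_Iic] at h1
        rw [ha', Set.mem_Iic] at h2
        rw [Set.mem_Icc]
        omega
    · exact (Set.not_infinite.mp hinf).subset Set.diff_subset
  set piece : Fin N → ℤ → Set (Fin N → ℤ) := fun j t => box (fun i =>
    if i < j then Q' i else if i = j then {t} else Q i) with hpiece
  have hpmem : ∀ (j : Fin N) (t : ℤ) (x : Fin N → ℤ), x ∈ piece j t ↔ ∀ i, x i ∈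
      (if i < j then Q' i else if i = j then ({t} : Set ℤ) else Q i) := fun _ _ _ => Iff.rfl
  have hpiecerank : ∀ j t, t ∈ Q j \ Q' j → ∃ kp, kp < k ∧ IsOrthantOfRank (piece j t) kp := by
    intro j t ht
    refine ⟨(infC (fun i => if i < j then Q' i else if i = j then ({t} : Set ℤ) else Q i)).card,
      ?_, isOrthantOfRank_iff_box.mpr ⟨_, fun i => ?_, rfl, rfl⟩⟩
    · have hsub : infC (fun i => if i < j then Q' i else if i = j then ({t} : Set ℤ) else Q i)
          ⊆ (infC Q).erase j := by
        intro i hi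
        have hi' : (if i < j then Q' i else if i = j then ({t} : Set ℤ) else Q i).Infinite :=
          mem_infC.mp hi
        rw [Finset.mem_erase]
        by_cases h1 : i < j
        · rw [if_pos h1] at hi'
          exact ⟨ne_of_lt h1, hinfeq ▸ mem_infC.mpr hi'⟩
        · rw [if_neg h1] at hi'
          by_cases h2 : i = j
          · rw [if_pos h2] at hi'
            exact absurd (Set.finite_singleton t) hi'
          · rw [if_neg h2] at hi'
            exact ⟨h2, mem_infC.mpr hi'⟩
      have hjQ : j ∈ infC Q := mem_infC.mpr (hjinf j t ht)
      have hle := Finset.card_le_card hsub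
      rw [Finset.card_erase_of_mem hjQ, hQcard] at hle
      have hkpos : 0 < k := hQcard ▸ Finset.card_pos.mpr ⟨j, hjQ⟩
      omega
    · by_cases h1 : i < j
      · rw [if_pos h1]
        exact hQ'c i
      · rw [if_neg h1]
        by_cases h2 : i = j
        · rw [if_pos h2]
          exact isCoord_singleton t
        · rw [if_neg h2]
          exact hQc i
  have hpsub : ∀ j t, t ∈ Q j \ Q' j → piece j t ⊆ box Q := by
    intro j t ht
    apply box_mono
    intro i
    by_cases h1 : i < j
    · rw [if_pos h1]
      exact hsubc i
    · rw [if_neg h1]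
      by_cases h2 : i = j
      · rw [if_pos h2, h2]
        exact Set.singleton_subset_iff.mpr ht.1
      · rw [if_neg h2]
  set I : Set (Fin N × ℤ) := {p | p.2 ∈ Q p.1 \ Q' p.1} with hI
  have hIfin : I.Finite := by
    apply Set.Finite.subset (Set.Finite.prod Set.finite_univ (Set.finite_iUnion hDfin))
    rintro ⟨j, t⟩ ht
    exact ⟨Set.mem_univ j, Set.mem_iUnion.mpr ⟨j, ht⟩⟩
  have hkey : ∀ j t, t ∈ Q j \ Q' j → ∀ j' t', t' ∈ Q j' \ Q' j' → (j, t) ≠ (j', t') →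
      Disjoint (piece j t) (piece j' t') := by
    intro j t ht j' t' ht' hne
    rcases lt_trichotomy j j' with hlt | heq | hgt
    · apply box_disjoint_of_coord j
      show Disjoint (if j < j then Q' j else if j = j then ({t} : Set ℤ) else Q j)
        (if j < j' then Q' j else if j = j' then ({t'} : Set ℤ) else Q j)
      rw [if_neg (lt_irrefl j), if_pos rfl, if_pos hlt]
      rw [Set.disjoint_left]
      intro u hu hu'
      rw [Set.mem_singleton_iff] at hu
      exact ht.2 (hu ▸ hu')
    · subst heq
      have htt : t ≠ t' := fun h => hne (by rw [h])
      apply box_disjoint_of_coord j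
      show Disjoint (if j < j then Q' j else if j = j then ({t} : Set ℤ) else Q j)
        (if j < j then Q' j else if j = j then ({t'} : Set ℤ) else Q j)
      rw [if_neg (lt_irrefl j), if_pos rfl, if_neg (lt_irrefl j), if_pos rfl]
      rw [Set.disjoint_left]
      intro u hu hu'
      rw [Set.mem_singleton_iff] at hu hu'
      exact htt (hu ▸ hu')
    · apply box_disjoint_of_coord j'
      show Disjoint (if j' < j then Q' j' else if j' = j then ({t} : Set ℤ) else Q j')
        (if j' < j' then Q' j' else if j' = j' then ({t'} : Set ℤ) else Q j')
      rw [if_pos hgt, if_neg (lt_irrefl j'), if_pos rfl]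
      rw [Set.disjoint_left]
      intro u hu hu'
      rw [Set.mem_singleton_iff] at hu'
      exact ht'.2 (hu' ▸ hu)
  have hL'disj : ∀ j t, t ∈ Q j \ Q' j → Disjoint (box Q') (piece j t) := by
    intro j t ht
    apply box_disjoint_of_coord j
    show Disjoint (Q' j) (if j < j then Q' j else if j = j then ({t} : Set ℤ) else Q j)
    rw [if_neg (lt_irrefl j), if_pos rfl]
    rw [Set.disjoint_left]
    intro u hu hu'
    rw [Set.mem_singleton_iff] at hu'
    exact ht.2 (hu' ▸ hu)
  set 𝓟 : Set (Set (Fin N → ℤ)) :=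
    insert (box Q') ((fun p : Fin N × ℤ => piece p.1 p.2) '' I) with h𝓟
  have hcover : ⋃₀ 𝓟 = box Q := by
    apply Set.Subset.antisymm
    · rintro x ⟨P, hP, hx⟩
      rcases Set.mem_insert_iff.mp hP with heq | ⟨⟨j, t⟩, ht, heq⟩
      · exact box_mono hsubc (by rwa [heq] at hx)
      · exact hpsub j t ht (by rwa [← heq] at hx)
    · intro x hx
      by_cases hall : ∀ i, x i ∈ Q' i
      · exact ⟨box Q', Set.mem_insert _ _, hall⟩
      · push_neg at hall
        have hTne : (Finset.univ.filter (fun i => x i ∉ Q' i)).Nonempty := by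
          obtain ⟨i, hi⟩ := hall
          exact ⟨i, Finset.mem_filter.mpr ⟨Finset.mem_univ i, hi⟩⟩
        set j := (Finset.univ.filter (fun i => x i ∉ Q' i)).min' hTne with hj
        have hjQ' : x j ∉ Q' j :=
          (Finset.mem_filter.mp ((Finset.univ.filter (fun i => x i ∉ Q' i)).min'_mem hTne)).2
        have htD : x j ∈ Q j \ Q' j := ⟨hx j, hjQ'⟩
        refine ⟨piece j (x j), Set.mem_insert_of_mem _ ⟨(j, x j), htD, rfl⟩, ?_⟩
        rw [hpmem]
        intro i
        by_cases h1 : i < j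
        · rw [if_pos h1]
          by_contra hnc
          have hiT : i ∈ Finset.univ.filter (fun i => x i ∉ Q' i) :=
            Finset.mem_filter.mpr ⟨Finset.mem_univ i, hnc⟩
          exact absurd ((Finset.univ.filter (fun i => x i ∉ Q' i)).min'_le i hiT)
            (not_le.mpr h1)
        · rw [if_neg h1]
          by_cases h2 : i = j
          · rw [if_pos h2, h2, Set.mem_singleton_iff]
          · rw [if_neg h2]
            exact hx i
  have hpd : 𝓟.PairwiseDisjoint id := by
    apply Set.PairwiseDisjoint.insert
    · rintro P ⟨⟨j, t⟩, ht, rfl⟩ P' ⟨⟨j', t'⟩, ht', rfl⟩ hne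
      show Disjoint (piece j t) (piece j' t')
      apply hkey j t ht j' t' ht'
      intro hc
      exact hne (congrArg (fun p : Fin N × ℤ => piece p.1 p.2) hc)
    · rintro P ⟨⟨j, t⟩, ht, rfl⟩ _
      exact hL'disj j t ht
  have hdec : ∀ P ∈ 𝓟, DecBy (fun M => IsOrthant M ∧ IsometricOn f M) P := by
    intro P hP
    rcases Set.mem_insert_iff.mp hP with heq | ⟨⟨j, t⟩, ht, heq⟩
    · subst heq
      exact decBy_self ⟨⟨k, hL'r⟩, hiso⟩
    · subst heq
      obtain ⟨kp, hkp, hrank⟩ := hpiecerank j t ht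
      exact IH kp hkp (piece j t) hrank (fun x hx => hLS (hpsub j t ht hx))
  have hfin𝓟 : 𝓟.Finite := (hIfin.image _).insert _
  have := DecBy.sUnion hfin𝓟 hpd hdec
  rwa [hcover] at this

lemma forward_dir {S : Set (Fin N → ℤ)} {f : (Fin N → ℤ) → (Fin N → ℤ)}
    (hpei : IsPeiMapOn S f) :
    ∀ L, IsOrthant L → L ⊆ S →
      ∃ L', IsOrthant L' ∧ L' ⊆ L ∧ Commensurable L L' ∧ IsometricOn f L' := by
  classical
  obtain ⟨𝓛, hfin, horth, hSU, hdisj, hisom⟩ := hpei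
  intro L hLorth hLS
  obtain ⟨k, hLk⟩ := hLorth
  obtain ⟨Q, hQc, hQcard, rfl⟩ := isOrthantOfRank_iff_box.mp hLk
  have hsel : ∀ j, ∃ p d : ℤ, (∀ t : ℕ, p + t * d ∈ Q j) ∧
      ((Q j).Infinite → (d = 1 ∧ Q j = Set.Ici p) ∨ (d = -1 ∧ Q j = Set.Iic p)) ∧
      (¬(Q j).Infinite → d = 0 ∧ Q j = {p}) := by
    intro j
    rcases hQc j with ⟨a, ha⟩ | ⟨a, ha⟩ | ⟨a, ha⟩
    · refine ⟨a, 1, fun t => ?_, fun _ => Or.inl ⟨rfl, ha⟩,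
        fun h => absurd (ha ▸ Set.Ici_infinite a) h⟩
      rw [ha, Set.mem_Ici]
      omega
    · refine ⟨a, -1, fun t => ?_, fun _ => Or.inr ⟨rfl, ha⟩,
        fun h => absurd (ha ▸ Set.Iic_infinite a) h⟩
      rw [ha, Set.mem_Iic]
      omega
    · refine ⟨a, 0, fun t => ?_, fun h => absurd (Set.not_infinite.mpr ?_) (not_not.mpr h),
        fun _ => ⟨rfl, ha⟩⟩
      · rw [ha, Set.mem_singleton_iff]
        omega
      · rw [ha]
        exact Set.finite_singleton a
  choose p d hmemQ hinfd hfind using hsel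
  set xt : ℕ → (Fin N → ℤ) := fun t j => p j + t * d j with hxt
  have hxQ : ∀ t, xt t ∈ box Q := fun t j => hmemQ j t
  have hxS : ∀ t : ℕ, xt t ∈ ⋃₀ 𝓛 := fun t => hSU ▸ hLS (hxQ t)
  have hpigeon : ∃ M ∈ 𝓛, {t : ℕ | xt t ∈ M}.Infinite := by
    by_contra hc
    push_neg at hc
    have hsub : (Set.univ : Set ℕ) ⊆ ⋃ M ∈ 𝓛, {t | xt t ∈ M} := by
      intro t _
      obtain ⟨M, hM, hxM⟩ := hxS t
      exact Set.mem_biUnion hM hxM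
    have hfinU : (⋃ M ∈ 𝓛, {t : ℕ | xt t ∈ M}).Finite :=
      hfin.biUnion (fun M hM => (hc M hM))
    exact Set.infinite_univ (hfinU.subset hsub)
  obtain ⟨M, hM, hTinf⟩ := hpigeon
  obtain ⟨R, hRc, hMeq⟩ := isOrthant_iff_box.mp (horth M hM)
  have htj : ∀ j, {t : ℕ | p j + t * d j ∈ R j}.Infinite := by
    intro j
    apply hTinf.mono
    intro t ht
    have : xt t ∈ box R := by rwa [← hMeq]
    exact this j
  set Q2 : Fin N → Set ℤ := fun j => if (Q j).Infinite then Q j ∩ R j else Q j with hQ2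
  have hkey : ∀ j, IsCoord (Q2 j) ∧ Q2 j ⊆ Q j ∧ Q2 j ⊆ R j ∧
      ((Q j).Infinite → (Q2 j).Infinite) := by
    intro j
    have hQ2j : Q2 j = if (Q j).Infinite then Q j ∩ R j else Q j := rfl
    by_cases hj : (Q j).Infinite
    · rw [hQ2j, if_pos hj]
      rcases hinfd j hj with ⟨hd, hq⟩ | ⟨hd, hq⟩
      · rcases hRc j with ⟨a, hra⟩ | ⟨a, hra⟩ | ⟨a, hra⟩
        · have heq : Q j ∩ R j = Set.Ici (max (p j) a) := by
            rw [hq, hra]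
            ext u
            simp only [Set.mem_inter_iff, Set.mem_Ici]
            omega
          rw [heq]
          exact ⟨isCoord_Ici _, by rw [← heq]; exact Set.inter_subset_left,
            by rw [← heq]; exact Set.inter_subset_right,
            fun _ => Set.Ici_infinite _⟩
        · exfalso
          have hss : {t : ℕ | p j + t * d j ∈ R j} ⊆ Set.Icc 0 (a - p j).toNat := by
            intro t ht
            rw [Set.mem_setOf_eq, hra, Set.mem_Iic, hd] at ht
            rw [Set.mem_Icc]
            omega
          exact (htj j) ((Set.finite_Icc _ _).subset hss)
        · exfalso
          have hss : {t : ℕ | p j + t * d j ∈ R j} ⊆ Set.Icc 0 (a - p j).toNat := by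
            intro t ht
            rw [Set.mem_setOf_eq, hra, Set.mem_singleton_iff, hd] at ht
            rw [Set.mem_Icc]
            omega
          exact (htj j) ((Set.finite_Icc _ _).subset hss)
      · rcases hRc j with ⟨a, hra⟩ | ⟨a, hra⟩ | ⟨a, hra⟩
        · exfalso
          have hss : {t : ℕ | p j + t * d j ∈ R j} ⊆ Set.Icc 0 (p j - a).toNat := by
            intro t ht
            rw [Set.mem_setOf_eq, hra, Set.mem_Ici, hd] at ht
            rw [Set.mem_Icc]
            omega
          exact (htj j) ((Set.finite_Icc _ _).subset hss)
        · have heq : Q j ∩ R j = Set.Iic (min (p j) a) := by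
            rw [hq, hra]
            ext u
            simp only [Set.mem_inter_iff, Set.mem_Iic]
            omega
          rw [heq]
          exact ⟨isCoord_Iic _, by rw [← heq]; exact Set.inter_subset_left,
            by rw [← heq]; exact Set.inter_subset_right,
            fun _ => Set.Iic_infinite _⟩
        · exfalso
          have hss : {t : ℕ | p j + t * d j ∈ R j} ⊆ Set.Icc 0 (p j - a).toNat := by
            intro t ht
            rw [Set.mem_setOf_eq, hra, Set.mem_singleton_iff, hd] at ht
            rw [Set.mem_Icc]
            omega
          exact (htj j) ((Set.finite_Icc _ _).subset hss)
    · rw [hQ2j, if_neg hj]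
      obtain ⟨hd, hq⟩ := hfind j hj
      have hpR : p j ∈ R j := by
        obtain ⟨t, ht⟩ := (htj j).nonempty
        rw [Set.mem_setOf_eq, hd] at ht
        have : p j + (t : ℤ) * 0 = p j := by ring
        rwa [this] at ht
      refine ⟨hQc j, subset_rfl, ?_, fun h => absurd h hj⟩
      rw [hq]
      exact Set.singleton_subset_iff.mpr hpR
  have hQ2card : (infC Q2).card = k := by
    rw [← hQcard]
    congr 1
    apply Finset.ext
    intro j
    rw [mem_infC, mem_infC]
    constructor
    · intro h
      exact h.mono (hkey j).2.1
    · intro h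
      exact (hkey j).2.2.2 h
  have hQ2rank : IsOrthantOfRank (box Q2) k :=
    isOrthantOfRank_iff_box.mpr ⟨Q2, fun j => (hkey j).1, hQ2card, rfl⟩
  have hsubL : box Q2 ⊆ box Q := box_mono (fun j => (hkey j).2.1)
  have hsubM : box Q2 ⊆ M := by
    rw [hMeq]
    exact box_mono (fun j => (hkey j).2.2.1)
  have hne2 : (box Q2).Nonempty := box_nonempty (fun j => (hkey j).1.nonempty)
  have hint : box Q ∩ box Q2 = box Q2 := Set.inter_eq_self_of_subset_right hsubL
  refine ⟨box Q2, ⟨k, hQ2rank⟩, hsubL, ⟨?_, ?_, ?_⟩, (hisom M hM).mono hsubM⟩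
  · rw [hint]
    exact hne2
  · rw [hint, hLk.orthRank_eq, hQ2rank.orthRank_eq]
  · rw [hint]

lemma backward_dir {S : Set (Fin N → ℤ)} {f : (Fin N → ℤ) → (Fin N → ℤ)}
    (hS : IsOrthohedral S)
    (h : ∀ L, IsOrthant L → L ⊆ S →
      ∃ L', IsOrthant L' ∧ L' ⊆ L ∧ Commensurable L L' ∧ IsometricOn f L') :
    IsPeiMapOn S f := by
  obtain ⟨𝓛₀, hfin, horth, hSeq⟩ := hS
  obtain ⟨𝓟, h1, h2, h3, h4⟩ := disjointify hfin horth
  have hdec : ∀ P ∈ 𝓟, DecBy (fun M => IsOrthant M ∧ IsometricOn f M) P := by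
    intro P hP
    obtain ⟨kP, hkP⟩ := h2 P hP
    apply main_ind h kP P hkP
    intro x hx
    rw [hSeq, ← h3]
    exact ⟨P, hP, hx⟩
  obtain ⟨𝓛, g1, g2, g3, g4⟩ := DecBy.sUnion h1 h4 hdec
  exact ⟨𝓛, g1, fun L hL => (g2 L hL).1, by rw [hSeq, ← h3, ← g3], g4,
    fun L hL => (g2 L hL).2⟩

/-- An injective map on an orthohedral set is pei iff every orthant of `S`
contains a commensurable suborthant on which it restricts to an isometry. -/
theorem stmt4 {N : ℕ} (S : Set (Fin N → ℤ)) (hS : IsOrthohedral S)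
    (f : (Fin N → ℤ) → (Fin N → ℤ)) (hinj : Set.InjOn f S) :
    IsPeiMapOn S f ↔ ∀ L, IsOrthant L → L ⊆ S →
      ∃ L', IsOrthant L' ∧ L' ⊆ L ∧ Commensurable L L' ∧ IsometricOn f L' :=
  ⟨forward_dir, backward_dir hS⟩

end PeiPaper
end

section
/- Every orthohedral set S ⊆ ℤ^N with rk(S) < N is pet-isomorphic to a finite disjoint union of stacks of orthants S' = ⋃_j S_j such that no maximal orthant of any S_j is parallel to a suborthant of S_k for k ≠ j. -/
open Pointwise

namespace PeiPaper

/-! ### Auxiliary box machinery -/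

section Aux

variable {N : ℕ}

/-- interval: point, up-ray, or down-ray -/
def ival : Option Bool → ℤ → Set ℤ
  | none => fun c => {c}
  | some true => fun c => Set.Ici c
  | some false => fun c => Set.Iic c

@[simp] lemma mem_ival_none {x c : ℤ} : x ∈ ival none c ↔ x = c := Iff.rfl
@[simp] lemma mem_ival_up {x c : ℤ} : x ∈ ival (some true) c ↔ c ≤ x := Iff.rfl
@[simp] lemma mem_ival_down {x c : ℤ} : x ∈ ival (some false) c ↔ x ≤ c := Iff.rfl

lemma self_mem_ival (d : Option Bool) (c : ℤ) : c ∈ ival d c := by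
  rcases d with _ | b
  · rfl
  · cases b <;> simp

lemma mem_ival_add {d : Option Bool} {t x c : ℤ} :
    t + x ∈ ival d c ↔ x ∈ ival d (c - t) := by
  rcases d with _ | b
  · simp; omega
  · cases b <;> simp <;> omega

def Box (δ : Fin N → Option Bool) (c : Fin N → ℤ) : Set (Fin N → ℤ) :=
  {x | ∀ i, x i ∈ ival (δ i) (c i)}

lemma mem_box_s5 {δ : Fin N → Option Bool} {c x : Fin N → ℤ} :
    x ∈ Box δ c ↔ ∀ i, x i ∈ ival (δ i) (c i) := Iff.rfl

lemma corner_mem_box (δ : Fin N → Option Bool) (c : Fin N → ℤ) : c ∈ Box δ c :=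
  fun i => self_mem_ival _ _

lemma box_nonempty_s5 (δ : Fin N → Option Bool) (c : Fin N → ℤ) : (Box δ c).Nonempty :=
  ⟨c, corner_mem_box δ c⟩

lemma image_add_box (δ : Fin N → Option Bool) (c t : Fin N → ℤ) :
    (fun x => t + x) '' Box δ c = Box δ (t + c) := by
  ext x
  constructor
  · rintro ⟨y, hy, rfl⟩ i
    have := hy i
    simp only [Pi.add_apply]
    rw [mem_ival_add]
    simpa using this
  · intro hx
    refine ⟨x - t, fun i => ?_, by funext i; simp⟩
    have := hx i
    simp only [Pi.add_apply] at this
    rw [show x i = t i + (x - t) i by simp, mem_ival_add] at this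
    simpa using this

lemma vadd_box (t : Fin N → ℤ) (δ : Fin N → Option Bool) (c : Fin N → ℤ) :
    t +ᵥ Box δ c = Box δ (t + c) := by
  rw [← image_add_box]; rfl

/-- the rank of a box direction -/
def drank (δ : Fin N → Option Bool) : ℕ :=
  (Finset.univ.filter (fun i => δ i ≠ none)).card

/-- Every box is an orthant of its rank. -/
lemma box_isOrthantOfRank (δ : Fin N → Option Bool) (c : Fin N → ℤ) :
    IsOrthantOfRank (Box δ c) (drank δ) := by
  classical
  refine ⟨c, Matrix.diagonal (fun i => if δ i = some false then -1 else 1),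
    Finset.univ.filter (fun i => δ i ≠ none), ?_, rfl, ?_⟩
  · unfold IsOrthMat
    rw [Matrix.diagonal_transpose, Matrix.diagonal_mul_diagonal]
    have h1 : (fun i => (if δ i = some false then (-1:ℤ) else 1) * (if δ i = some false then -1 else 1)) = fun _ => 1 := by
      funext i; by_cases h : δ i = some false <;> simp [h]
    rw [h1, Matrix.diagonal_one]
  · ext x
    simp only [Set.mem_image]
    constructor
    · intro hx
      refine ⟨fun i => (if δ i = some false then -1 else 1) * (x i - c i), ?_, ?_⟩
      · constructor
        · intro i
          have := hx i
          rcases hd : δ i with _ | b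
          · rw [hd] at this; simp at this; simp [hd, this]
          · cases b
            · rw [hd] at this; simp at this; simp [hd]; omega
            · rw [hd] at this; simp at this; simp [hd]; omega
        · intro i hi
          simp only [Finset.mem_filter, Finset.mem_univ, true_and, not_not] at hi
          have := hx i
          rw [hi] at this
          simp at this
          simp [this]
      · funext i
        simp only [Matrix.mulVec_diagonal, Pi.add_apply]
        by_cases h : δ i = some false <;> simp [h] <;> ring
    · rintro ⟨v, ⟨hv0, hvY⟩, rfl⟩ i
      simp only [Pi.add_apply, Matrix.mulVec_diagonal]
      rcases hd : δ i with _ | b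
      · have : v i = 0 := hvY i (by simp [hd])
        simp [hd, this]
      · cases b
        · have := hv0 i
          simp [hd]; omega
        · have := hv0 i
          simp [hd]; omega

lemma box_isOrthant (δ : Fin N → Option Bool) (c : Fin N → ℤ) : IsOrthant (Box δ c) :=
  ⟨_, box_isOrthantOfRank δ c⟩


lemma int_sum_sq_eq_one {ι : Type*} (s : Finset ι) (f : ι → ℤ)
    (h : ∑ j ∈ s, f j * f j = 1) :
    ∃ j ∈ s, (f j = 1 ∨ f j = -1) ∧ ∀ j' ∈ s, j' ≠ j → f j' = 0 := by
  classical
  have hex : ∃ j ∈ s, f j ≠ 0 := by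
    by_contra hc
    push_neg at hc
    rw [Finset.sum_eq_zero (fun j hj => by rw [hc j hj, mul_zero])] at h
    exact one_ne_zero h.symm
  obtain ⟨j, hj, hfj⟩ := hex
  have hsplit : f j * f j + ∑ j' ∈ s.erase j, f j' * f j' = 1 := by
    have := Finset.add_sum_erase s (fun x => f x * f x) hj
    rw [this]; exact h
  have h1 : 1 ≤ f j * f j := by
    rcases lt_trichotomy (f j) 0 with h' | h' | h'
    · nlinarith
    · exact absurd h' hfj
    · nlinarith
  have h2 : 0 ≤ ∑ j' ∈ s.erase j, f j' * f j' :=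
    Finset.sum_nonneg (fun j' _ => mul_self_nonneg _)
  have h3 : ∑ j' ∈ s.erase j, f j' * f j' = 0 := by omega
  refine ⟨j, hj, ?_, ?_⟩
  · have : f j * f j = 1 := by omega
    exact mul_self_eq_one_iff.mp this
  · intro j' hj' hne
    have := (Finset.sum_eq_zero_iff_of_nonneg
      (fun j'' _ => mul_self_nonneg (f j''))).mp h3 j' (Finset.mem_erase.mpr ⟨hne, hj'⟩)
    exact mul_self_eq_zero.mp this

/-- Every orthant of rank `k` is a box of rank `k`. -/
lemma orthant_eq_box {N : ℕ} {L : Set (Fin N → ℤ)} {k : ℕ} (hL : IsOrthantOfRank L k) :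
    ∃ (δ : Fin N → Option Bool) (c : Fin N → ℤ), L = Box δ c ∧ drank δ = k := by
  classical
  obtain ⟨a, A, Y, hA, hY, rfl⟩ := hL
  have hrow : ∀ i, ∃ j, (A i j = 1 ∨ A i j = -1) ∧ ∀ j', j' ≠ j → A i j' = 0 := by
    intro i
    have h1 : ∑ j, A i j * A i j = 1 := by
      have := congrFun (congrFun hA i) i
      simpa [Matrix.mul_apply, Matrix.transpose_apply, Matrix.one_apply] using this
    obtain ⟨j, _, hj1, hj2⟩ := int_sum_sq_eq_one Finset.univ _ h1
    exact ⟨j, hj1, fun j' hne => hj2 j' (Finset.mem_univ _) hne⟩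
  choose σ hσ1 hσ2 using hrow
  have hσnz : ∀ i, A i (σ i) ≠ 0 := by
    intro i
    rcases hσ1 i with h | h <;> rw [h] <;> decide
  have hσinj : Function.Injective σ := by
    intro i i' hii
    by_contra hne
    have h0 : ∑ j, A i j * A i' j = 0 := by
      have := congrFun (congrFun hA i) i'
      simpa [Matrix.mul_apply, Matrix.transpose_apply, Matrix.one_apply, hne] using this
    rw [Finset.sum_eq_single (σ i)
      (fun j _ hne' => by rw [hσ2 i j hne', zero_mul])
      (fun h => absurd (Finset.mem_univ _) h)] at h0
    have hz : A i' (σ i) ≠ 0 := by rw [hii]; exact hσnz i'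
    exact (mul_ne_zero (hσnz i) hz) h0
  have hσbij : Function.Bijective σ := (Finite.injective_iff_bijective).mp hσinj
  set e := Equiv.ofBijective σ hσbij with he
  have heσ : ∀ i, e i = σ i := fun i => rfl
  have hmv : ∀ (v : Fin N → ℤ) (i : Fin N), A.mulVec v i = A i (σ i) * v (σ i) := by
    intro v i
    rw [Matrix.mulVec, dotProduct]
    exact Finset.sum_eq_single (σ i)
      (fun j _ hne' => by rw [hσ2 i j hne', zero_mul])
      (fun h => absurd (Finset.mem_univ _) h)
  refine ⟨fun i => if σ i ∈ Y then (if A i (σ i) = 1 then some true else some false) else none,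
    a, ?_, ?_⟩
  · ext x
    simp only [Set.mem_image]
    constructor
    · rintro ⟨v, ⟨hv0, hvY⟩, rfl⟩ i
      simp only [Pi.add_apply, hmv]
      by_cases hmem : σ i ∈ Y
      · rcases hσ1 i with h | h
        · have := hv0 (σ i)
          simp [hmem, h]; omega
        · have := hv0 (σ i)
          have hne : A i (σ i) ≠ 1 := by rw [h]; decide
          simp [hmem, h, hne]; omega
      · have : v (σ i) = 0 := hvY _ hmem
        simp [hmem, this]
    · intro hx
      refine ⟨fun j => A (e.symm j) j * (x (e.symm j) - a (e.symm j)), ⟨?_, ?_⟩, ?_⟩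
      · intro j
        show 0 ≤ A (e.symm j) j * (x (e.symm j) - a (e.symm j))
        set i := e.symm j with hi
        have hsi : σ i = j := e.apply_symm_apply j
        have hbx := hx i
        rw [← hsi]
        by_cases hmem : σ i ∈ Y
        · rcases hσ1 i with h | h
          · rw [h]
            simp only [hmem, h, if_true, if_pos rfl] at hbx
            simp only [mem_ival_up] at hbx
            omega
          · rw [h]
            have hne : A i (σ i) ≠ 1 := by rw [h]; decide
            simp only [hmem, if_true, if_neg hne] at hbx
            simp only [mem_ival_down] at hbx
            omega
        · simp only [hmem, if_false] at hbx
          simp only [mem_ival_none] at hbx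
          rw [hbx]; ring_nf; simp
      · intro j hmem
        show A (e.symm j) j * (x (e.symm j) - a (e.symm j)) = 0
        set i := e.symm j with hi
        have hsi : σ i = j := e.apply_symm_apply j
        rw [← hsi] at hmem ⊢
        have hbx := hx i
        simp only [hmem, if_false] at hbx
        simp only [mem_ival_none] at hbx
        rw [hbx]; ring
      · funext i
        simp only [Pi.add_apply, hmv]
        have : e.symm (σ i) = i := by
          rw [← heσ]; exact e.symm_apply_apply i
        rw [this]
        rcases hσ1 i with h | h <;> rw [h] <;> ring
  · rw [drank, ← hY]
    have : (Finset.univ.filter fun i =>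
        (if σ i ∈ Y then (if A i (σ i) = 1 then some true else some false) else none) ≠ none)
        = Finset.univ.filter (fun i => σ i ∈ Y) := by
      apply Finset.filter_congr
      intro i _
      by_cases hmem : σ i ∈ Y
      · simp [hmem]; by_cases h1 : A i (σ i) = 1 <;> simp [h1]
      · simp [hmem]
    rw [this]
    apply Finset.card_bij (fun i _ => σ i)
    · intro i hi; exact (Finset.mem_filter.mp hi).2
    · intro i _ i' _ hii; exact hσinj hii
    · intro j hj
      exact ⟨e.symm j, Finset.mem_filter.mpr ⟨Finset.mem_univ _,
        by rw [← heσ, e.apply_symm_apply]; exact hj⟩, by rw [← heσ, e.apply_symm_apply]⟩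

end Aux

section Part

variable {N : ℕ}

/-- A list of intervals with union `K` and pairwise disjoint members. -/
def GoodList (K : Set ℤ) (l : List (Option Bool × ℤ)) : Prop :=
  (∀ x, x ∈ K ↔ ∃ p ∈ l, x ∈ ival p.1 p.2) ∧
  l.Pairwise (fun p q => ∀ x, x ∈ ival p.1 p.2 → x ∉ ival q.1 q.2)

def ptList (a b : ℤ) : List (Option Bool × ℤ) :=
  (List.range (b + 1 - a).toNat).map fun t : ℕ => ((none : Option Bool), a + (t : ℤ))

lemma mem_ptList {a b : ℤ} {p : Option Bool × ℤ} :
    p ∈ ptList a b ↔ ∃ t : ℕ, (t : ℤ) < b + 1 - a ∧ p = (none, a + (t : ℤ)) := by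
  constructor
  · intro hp
    obtain ⟨t, ht, rfl⟩ := List.mem_map.mp hp
    rw [List.mem_range] at ht
    exact ⟨t, by omega, rfl⟩
  · rintro ⟨t, ht, rfl⟩
    exact List.mem_map.mpr ⟨t, List.mem_range.mpr (by omega), rfl⟩

lemma ptList_pairwise (a b : ℤ) :
    (ptList a b).Pairwise (fun p q => ∀ x, x ∈ ival p.1 p.2 → x ∉ ival q.1 q.2) := by
  rw [ptList, List.pairwise_map]
  have h := List.pairwise_lt_range (n := (b + 1 - a).toNat)
  refine h.imp (fun {t t'} hlt => ?_)
  intro x hx hx'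
  simp only [mem_ival_none] at hx hx'
  omega

lemma mem_unionOf_ptList {a b x : ℤ} :
    (∃ p ∈ ptList a b, x ∈ ival p.1 p.2) ↔ a ≤ x ∧ x ≤ b := by
  constructor
  · rintro ⟨p, hp, hx⟩
    obtain ⟨t, ht, rfl⟩ := mem_ptList.mp hp
    simp only [mem_ival_none] at hx
    omega
  · rintro ⟨h1, h2⟩
    refine ⟨(none, a + ((x - a).toNat : ℤ)),
      mem_ptList.mpr ⟨(x - a).toNat, by omega, rfl⟩, ?_⟩
    simp only [mem_ival_none]
    omega

lemma exists_good_inter (d d' : Option Bool) (c c' : ℤ) :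
    ∃ l, GoodList (ival d c ∩ ival d' c') l := by
  classical
  rcases d with _ | b
  · by_cases h : c ∈ ival d' c'
    · refine ⟨[(none, c)], fun x => ?_, by simp⟩
      simp only [Set.mem_inter_iff, mem_ival_none, List.mem_singleton]
      constructor
      · rintro ⟨hxc, _⟩
        exact ⟨(none, c), rfl, by simpa using hxc⟩
      · rintro ⟨p, rfl, hx⟩
        simp only [mem_ival_none] at hx
        subst hx
        exact ⟨rfl, h⟩
    · refine ⟨[], fun x => ?_, by simp⟩
      simp only [Set.mem_inter_iff, mem_ival_none]
      constructor
      · rintro ⟨hxc, h2⟩; exact absurd (by rw [← hxc]; exact h2) h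
      · rintro ⟨p, hp, _⟩; simp at hp
  · rcases d' with _ | b'
    · by_cases h : c' ∈ ival (some b) c
      · refine ⟨[(none, c')], fun x => ?_, by simp⟩
        simp only [Set.mem_inter_iff, mem_ival_none, List.mem_singleton]
        constructor
        · rintro ⟨h1, hxc⟩
          exact ⟨(none, c'), rfl, by simpa using hxc⟩
        · rintro ⟨p, rfl, hx⟩
          simp only [mem_ival_none] at hx
          subst hx
          exact ⟨h, rfl⟩
      · refine ⟨[], fun x => ?_, by simp⟩
        simp only [Set.mem_inter_iff, mem_ival_none]
        constructor
        · rintro ⟨h1, hxc⟩; exact absurd (by rw [← hxc]; exact h1) h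
        · rintro ⟨p, hp, _⟩; simp at hp
    · cases b <;> cases b'
      · refine ⟨[(some false, min c c')], fun x => ?_, by simp⟩
        simp only [Set.mem_inter_iff, mem_ival_down, List.mem_singleton]
        constructor
        · rintro ⟨h1, h2⟩
          refine ⟨(some false, min c c'), rfl, ?_⟩
          simp only [mem_ival_down]
          omega
        · rintro ⟨p, rfl, hx⟩
          simp only [mem_ival_down] at hx
          omega
      · refine ⟨ptList c' c, fun x => ?_, ptList_pairwise _ _⟩
        rw [mem_unionOf_ptList]
        simp only [Set.mem_inter_iff, mem_ival_down, mem_ival_up]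
        omega
      · refine ⟨ptList c c', fun x => ?_, ptList_pairwise _ _⟩
        rw [mem_unionOf_ptList]
        simp only [Set.mem_inter_iff, mem_ival_down, mem_ival_up]
      · refine ⟨[(some true, max c c')], fun x => ?_, by simp⟩
        simp only [Set.mem_inter_iff, mem_ival_up, List.mem_singleton]
        constructor
        · rintro ⟨h1, h2⟩
          refine ⟨(some true, max c c'), rfl, ?_⟩
          simp only [mem_ival_up]
          omega
        · rintro ⟨p, rfl, hx⟩
          simp only [mem_ival_up] at hx
          omega

lemma exists_good_diff (d d' : Option Bool) (c c' : ℤ) :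
    ∃ l, GoodList (ival d c \ ival d' c') l := by
  classical
  rcases d with _ | b
  · by_cases h : c ∈ ival d' c'
    · refine ⟨[], fun x => ?_, by simp⟩
      simp only [Set.mem_diff, mem_ival_none]
      constructor
      · rintro ⟨hxc, h2⟩; exact absurd (by rw [hxc]; exact h) h2
      · rintro ⟨p, hp, _⟩; simp at hp
    · refine ⟨[(none, c)], fun x => ?_, by simp⟩
      simp only [Set.mem_diff, mem_ival_none, List.mem_singleton]
      constructor
      · rintro ⟨hxc, _⟩
        exact ⟨(none, c), rfl, by simpa using hxc⟩
      · rintro ⟨p, rfl, hx⟩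
        simp only [mem_ival_none] at hx
        subst hx
        exact ⟨rfl, h⟩
  · cases b
    · rcases d' with _ | b'
      · by_cases h : c < c'
        · refine ⟨[(some false, c)], fun x => ?_, by simp⟩
          simp only [Set.mem_diff, mem_ival_down, mem_ival_none, List.mem_singleton]
          constructor
          · rintro ⟨h1, _⟩
            refine ⟨(some false, c), rfl, ?_⟩
            simp only [mem_ival_down]
            omega
          · rintro ⟨p, rfl, hx⟩
            simp only [mem_ival_down] at hx
            constructor
            · omega
            · omega
        · refine ⟨(some false, c' - 1) :: ptList (c' + 1) c, fun x => ?_, ?_⟩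
          · simp only [Set.mem_diff, mem_ival_down, mem_ival_none, List.mem_cons]
            constructor
            · rintro ⟨h1, h2⟩
              rcases lt_or_ge x c' with h3 | h3
              · refine ⟨(some false, c' - 1), Or.inl rfl, ?_⟩
                simp only [mem_ival_down]
                omega
              · refine ⟨(none, (c' + 1) + ((x - (c' + 1)).toNat : ℤ)),
                  Or.inr (mem_ptList.mpr ⟨(x - (c' + 1)).toNat, by omega, rfl⟩), ?_⟩
                simp only [mem_ival_none]
                omega
            · rintro ⟨p, hp | hp, hx⟩
              · subst hp
                simp only [mem_ival_down] at hx
                exact ⟨by omega, by omega⟩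
              · obtain ⟨t, ht, rfl⟩ := mem_ptList.mp hp
                simp only [mem_ival_none] at hx
                exact ⟨by omega, by omega⟩
          · constructor
            · intro p hp x hx
              obtain ⟨t, ht, rfl⟩ := mem_ptList.mp hp
              simp only [mem_ival_down] at hx
              simp only [mem_ival_none]
              omega
            · exact ptList_pairwise _ _
      · cases b'
        · by_cases h : c ≤ c'
          · refine ⟨[], fun x => ?_, by simp⟩
            simp only [Set.mem_diff, mem_ival_down]
            constructor
            · rintro ⟨h1, h2⟩; omega
            · rintro ⟨p, hp, _⟩; simp at hp
          · refine ⟨ptList (c' + 1) c, fun x => ?_, ptList_pairwise _ _⟩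
            rw [mem_unionOf_ptList]
            simp only [Set.mem_diff, mem_ival_down]
            omega
        · refine ⟨[(some false, min c (c' - 1))], fun x => ?_, by simp⟩
          simp only [Set.mem_diff, mem_ival_down, mem_ival_up, List.mem_singleton]
          constructor
          · rintro ⟨h1, h2⟩
            refine ⟨(some false, min c (c' - 1)), rfl, ?_⟩
            simp only [mem_ival_down]
            omega
          · rintro ⟨p, rfl, hx⟩
            simp only [mem_ival_down] at hx
            omega
    · rcases d' with _ | b'
      · by_cases h : c' < c
        · refine ⟨[(some true, c)], fun x => ?_, by simp⟩
          simp only [Set.mem_diff, mem_ival_up, mem_ival_none, List.mem_singleton]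
          constructor
          · rintro ⟨h1, _⟩
            refine ⟨(some true, c), rfl, ?_⟩
            simp only [mem_ival_up]
            omega
          · rintro ⟨p, rfl, hx⟩
            simp only [mem_ival_up] at hx
            constructor
            · omega
            · omega
        · refine ⟨(some true, c' + 1) :: ptList c (c' - 1), fun x => ?_, ?_⟩
          · simp only [Set.mem_diff, mem_ival_up, mem_ival_none, List.mem_cons]
            constructor
            · rintro ⟨h1, h2⟩
              rcases lt_or_ge c' x with h3 | h3
              · refine ⟨(some true, c' + 1), Or.inl rfl, ?_⟩
                simp only [mem_ival_up]
                omega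
              · refine ⟨(none, c + ((x - c).toNat : ℤ)),
                  Or.inr (mem_ptList.mpr ⟨(x - c).toNat, by omega, rfl⟩), ?_⟩
                simp only [mem_ival_none]
                omega
            · rintro ⟨p, hp | hp, hx⟩
              · subst hp
                simp only [mem_ival_up] at hx
                exact ⟨by omega, by omega⟩
              · obtain ⟨t, ht, rfl⟩ := mem_ptList.mp hp
                simp only [mem_ival_none] at hx
                exact ⟨by omega, by omega⟩
          · constructor
            · intro p hp x hx
              obtain ⟨t, ht, rfl⟩ := mem_ptList.mp hp
              simp only [mem_ival_up] at hx
              simp only [mem_ival_none]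
              omega
            · exact ptList_pairwise _ _
      · cases b'
        · refine ⟨[(some true, max c (c' + 1))], fun x => ?_, by simp⟩
          simp only [Set.mem_diff, mem_ival_down, mem_ival_up, List.mem_singleton]
          constructor
          · rintro ⟨h1, h2⟩
            refine ⟨(some true, max c (c' + 1)), rfl, ?_⟩
            simp only [mem_ival_up]
            omega
          · rintro ⟨p, rfl, hx⟩
            simp only [mem_ival_up] at hx
            omega
        · by_cases h : c' ≤ c
          · refine ⟨[], fun x => ?_, by simp⟩
            simp only [Set.mem_diff, mem_ival_up]
            constructor
            · rintro ⟨h1, h2⟩; omega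
            · rintro ⟨p, hp, _⟩; simp at hp
          · refine ⟨ptList c (c' - 1), fun x => ?_, ptList_pairwise _ _⟩
            rw [mem_unionOf_ptList]
            simp only [Set.mem_diff, mem_ival_up]
            omega

lemma exists_good_single (d : Option Bool) (c : ℤ) : GoodList (ival d c) [(d, c)] :=
  ⟨fun x => by simp, by simp⟩

/-- `S` admits a finite partition into boxes. -/
def BP (S : Set (Fin N → ℤ)) : Prop :=
  ∃ (n : ℕ) (δ : Fin n → Fin N → Option Bool) (c : Fin n → Fin N → ℤ),
    (∀ a b, a ≠ b → ∀ x, x ∈ Box (δ a) (c a) → x ∉ Box (δ b) (c b)) ∧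
    S = ⋃ a, Box (δ a) (c a)

lemma BP_of_family {ι : Type} [Fintype ι] {S : Set (Fin N → ℤ)}
    (δ : ι → Fin N → Option Bool) (c : ι → Fin N → ℤ)
    (hdisj : ∀ a b, a ≠ b → ∀ x, x ∈ Box (δ a) (c a) → x ∉ Box (δ b) (c b))
    (hS : S = ⋃ i, Box (δ i) (c i)) : BP S := by
  classical
  set e := (Fintype.equivFin ι).symm
  refine ⟨Fintype.card ι, fun a => δ (e a), fun a => c (e a),
    fun a b hab => hdisj _ _ (fun h => hab (e.injective h)), ?_⟩
  rw [hS]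
  ext x
  simp only [Set.mem_iUnion]
  exact ⟨fun ⟨i, hi⟩ => ⟨e.symm i, by simpa using hi⟩, fun ⟨a, ha⟩ => ⟨e a, ha⟩⟩

lemma BP_box (δ : Fin N → Option Bool) (c : Fin N → ℤ) : BP (Box δ c) :=
  ⟨1, fun _ => δ, fun _ => c, fun a b hab => absurd (Subsingleton.elim a b) hab,
    (Set.iUnion_const _).symm⟩

lemma BP_empty : BP (∅ : Set (Fin N → ℤ)) :=
  ⟨0, Fin.elim0, Fin.elim0, fun a => a.elim0, by simp⟩

lemma BP_pi (K : Fin N → Set ℤ) (l : ∀ _ : Fin N, List (Option Bool × ℤ))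
    (h : ∀ j, GoodList (K j) (l j)) : BP {x | ∀ j, x j ∈ K j} := by
  classical
  apply BP_of_family (ι := ∀ j : Fin N, Fin (l j).length)
    (δ := fun g j => ((l j).get (g j)).1) (c := fun g j => ((l j).get (g j)).2)
  · intro g g' hgg x hx hx'
    have hj : ∃ j, g j ≠ g' j := by
      by_contra hc
      push_neg at hc
      exact hgg (funext hc)
    obtain ⟨j, hj⟩ := hj
    have h1 := hx j
    have h2 := hx' j
    have hpw := List.pairwise_iff_get.mp (h j).2
    rcases lt_or_gt_of_ne hj with hlt | hlt
    · exact hpw _ _ hlt (x j) h1 h2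
    · exact hpw _ _ hlt (x j) h2 h1
  · ext x
    simp only [Set.mem_setOf_eq, Set.mem_iUnion, mem_box_s5]
    constructor
    · intro hx
      have hch : ∀ j, ∃ k : Fin (l j).length, x j ∈ ival ((l j).get k).1 ((l j).get k).2 := by
        intro j
        obtain ⟨p, hp, hxp⟩ := ((h j).1 (x j)).mp (hx j)
        obtain ⟨k, hk⟩ := List.mem_iff_get.mp hp
        exact ⟨k, by rw [hk]; exact hxp⟩
      choose g hg using hch
      exact ⟨g, hg⟩
    · rintro ⟨g, hg⟩ j
      refine ((h j).1 (x j)).mpr ⟨(l j).get (g j), ?_, hg j⟩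
      exact List.mem_iff_get.mpr ⟨g j, rfl⟩

lemma BP_box_inter_box (δ ε : Fin N → Option Bool) (c e : Fin N → ℤ) :
    BP (Box δ c ∩ Box ε e) := by
  classical
  have h : ∀ j : Fin N, ∃ l, GoodList (ival (δ j) (c j) ∩ ival (ε j) (e j)) l :=
    fun j => exists_good_inter _ _ _ _
  choose l hl using h
  have heq : Box δ c ∩ Box ε e = {x | ∀ j, x j ∈ ival (δ j) (c j) ∩ ival (ε j) (e j)} := by
    ext x
    simp only [Set.mem_inter_iff, mem_box_s5, Set.mem_setOf_eq]
    exact ⟨fun ⟨h1, h2⟩ j => ⟨h1 j, h2 j⟩, fun h => ⟨fun j => (h j).1, fun j => (h j).2⟩⟩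
  rw [heq]
  exact BP_pi _ l hl

lemma BP_iUnion {r : ℕ} (F : Fin r → Set (Fin N → ℤ)) (hF : ∀ i, BP (F i))
    (hdisj : ∀ i i', i ≠ i' → ∀ x, x ∈ F i → x ∉ F i') : BP (⋃ i, F i) := by
  classical
  choose n δ c hd hU using hF
  apply BP_of_family (ι := Σ i : Fin r, Fin (n i))
    (δ := fun p => δ p.1 p.2) (c := fun p => c p.1 p.2)
  · rintro ⟨i, a⟩ ⟨i', a'⟩ hne x hx hx'
    by_cases hii : i = i'
    · subst hii
      have haa : a ≠ a' := fun h => hne (by rw [h])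
      exact hd i a a' haa x hx hx'
    · have h1 : x ∈ F i := by rw [hU i]; exact Set.mem_iUnion.mpr ⟨a, hx⟩
      have h2 : x ∈ F i' := by rw [hU i']; exact Set.mem_iUnion.mpr ⟨a', hx'⟩
      exact hdisj i i' hii x h1 h2
  · ext x
    simp only [Set.mem_iUnion, Sigma.exists]
    constructor
    · rintro ⟨i, hi⟩
      rw [hU i] at hi
      obtain ⟨a, ha⟩ := Set.mem_iUnion.mp hi
      exact ⟨i, a, ha⟩
    · rintro ⟨i, a, ha⟩
      exact ⟨i, by rw [hU i]; exact Set.mem_iUnion.mpr ⟨a, ha⟩⟩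

lemma BP_box_diff_box (δ ε : Fin N → Option Bool) (c e : Fin N → ℤ) :
    BP (Box δ c \ Box ε e) := by
  classical
  set K : Fin N → Fin N → Set ℤ := fun i j =>
    if j < i then ival (δ j) (c j) ∩ ival (ε j) (e j)
    else if j = i then ival (δ j) (c j) \ ival (ε j) (e j)
    else ival (δ j) (c j) with hK
  set F : Fin N → Set (Fin N → ℤ) := fun i => {x | ∀ j, x j ∈ K i j} with hF
  have hFBP : ∀ i, BP (F i) := by
    intro i
    have h : ∀ j : Fin N, ∃ l, GoodList (K i j) l := by
      intro j
      by_cases h1 : j < i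
      · simp only [hK, if_pos h1]; exact exists_good_inter _ _ _ _
      · by_cases h2 : j = i
        · simp only [hK, if_neg h1, if_pos h2]; exact exists_good_diff _ _ _ _
        · simp only [hK, if_neg h1, if_neg h2]; exact ⟨_, exists_good_single _ _⟩
    choose l hl using h
    exact BP_pi _ l hl
  have hdisj : ∀ i i', i ≠ i' → ∀ x, x ∈ F i → x ∉ F i' := by
    intro i i' hne x hx hx'
    rcases lt_or_gt_of_ne hne with hlt | hlt
    · have h1 := hx i
      have h2 := hx' i
      simp only [hK, hF, if_neg (lt_irrefl i), if_pos rfl] at h1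
      simp only [hK, hF, if_pos hlt] at h2
      exact h1.2 h2.2
    · have h1 := hx' i'
      have h2 := hx i'
      simp only [hK, hF, if_neg (lt_irrefl i'), if_pos rfl] at h1
      simp only [hK, hF, if_pos hlt] at h2
      exact h1.2 h2.2
  have heq : Box δ c \ Box ε e = ⋃ i, F i := by
    ext x
    simp only [Set.mem_diff, mem_box_s5, Set.mem_iUnion]
    constructor
    · rintro ⟨h1, h2⟩
      have hex : ∃ j, x j ∉ ival (ε j) (e j) := by
        by_contra hc
        push_neg at hc
        exact h2 hc
      obtain ⟨i0, hi0, hmin⟩ := Finset.exists_min_image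
        (Finset.univ.filter (fun j => x j ∉ ival (ε j) (e j))) id
        (by obtain ⟨j, hj⟩ := hex
            exact ⟨j, Finset.mem_filter.mpr ⟨Finset.mem_univ _, hj⟩⟩)
      have hi0mem : x i0 ∉ ival (ε i0) (e i0) := (Finset.mem_filter.mp hi0).2
      refine ⟨i0, fun j => ?_⟩
      by_cases hj1 : j < i0
      · have hj2 : x j ∈ ival (ε j) (e j) := by
          by_contra hc
          exact absurd (hmin j (Finset.mem_filter.mpr ⟨Finset.mem_univ _, hc⟩))
            (not_le.mpr hj1)
        simp only [hK, if_pos hj1]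
        exact ⟨h1 j, hj2⟩
      · by_cases hj2 : j = i0
        · simp only [hK, if_neg hj1, if_pos hj2]
          subst hj2
          exact ⟨h1 j, hi0mem⟩
        · simp only [hK, if_neg hj1, if_neg hj2]
          exact h1 j
    · rintro ⟨i, hi⟩
      constructor
      · intro j
        have hj := hi j
        by_cases hj1 : j < i
        · simp only [hK, if_pos hj1] at hj; exact hj.1
        · by_cases hj2 : j = i
          · simp only [hK, if_neg hj1, if_pos hj2] at hj; exact hj.1
          · simp only [hK, if_neg hj1, if_neg hj2] at hj; exact hj
      · intro hc
        have hj := hi i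
        simp only [hK, if_neg (lt_irrefl i), if_pos rfl] at hj
        exact hj.2 (hc i)
  rw [heq]
  exact BP_iUnion F hFBP hdisj

lemma BP_diff_box {S : Set (Fin N → ℤ)} (hS : BP S) (ε : Fin N → Option Bool)
    (e : Fin N → ℤ) : BP (S \ Box ε e) := by
  obtain ⟨n, δ, c, hd, rfl⟩ := hS
  rw [Set.iUnion_diff]
  exact BP_iUnion _ (fun a => BP_box_diff_box _ _ _ _)
    (fun a b hab x hx hx' => hd a b hab x hx.1 hx'.1)

lemma BP_union {S T : Set (Fin N → ℤ)} (hS : BP S) (hT : BP T)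
    (hd : ∀ x, x ∈ S → x ∉ T) : BP (S ∪ T) := by
  classical
  have heq : S ∪ T = ⋃ i : Fin 2, (if i = 0 then S else T) := by
    ext x
    simp only [Set.mem_union, Set.mem_iUnion]
    constructor
    · rintro (h | h)
      · exact ⟨0, by simpa⟩
      · exact ⟨1, by simpa⟩
    · rintro ⟨i, hi⟩
      by_cases h : i = 0
      · left; simpa [h] using hi
      · right; simpa [h] using hi
  rw [heq]
  apply BP_iUnion
  · intro i
    by_cases h : i = 0 <;> simp [h, hS, hT]
  · intro i i' hne x hx hx'
    by_cases h : i = 0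
    · have h' : i' ≠ 0 := fun hc => hne (by rw [h, hc])
      simp only [h, if_pos rfl] at hx
      simp only [if_neg h'] at hx'
      exact hd x hx hx'
    · have h' : i' = 0 := by omega
      simp only [if_neg h] at hx
      simp only [h', if_pos rfl] at hx'
      exact hd x hx' hx

lemma BP_of_orthohedral {S : Set (Fin N → ℤ)} (hS : IsOrthohedral S) : BP S := by
  classical
  obtain ⟨𝓛, hfin, horth, rfl⟩ := hS
  revert horth
  refine Set.Finite.induction_on (motive := fun 𝓣 _ => (∀ L ∈ 𝓣, IsOrthant L) → BP (⋃₀ 𝓣))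
    _ hfin (fun _ => by simpa using BP_empty) ?_
  intro L 𝓛' hL h𝓛' IH horth
  obtain ⟨k, hk⟩ := horth L (Set.mem_insert _ _)
  obtain ⟨δ, c, hLeq, _⟩ := orthant_eq_box hk
  have hIH : BP (⋃₀ 𝓛') := IH (fun L' hL' => horth L' (Set.mem_insert_of_mem _ hL'))
  have heq : ⋃₀ insert L 𝓛' = Box δ c ∪ (⋃₀ 𝓛' \ Box δ c) := by
    rw [Set.sUnion_insert, hLeq, Set.union_diff_self]
  rw [heq]
  exact BP_union (BP_box δ c) (BP_diff_box hIH δ c) (fun x hx hx' => hx'.2 hx)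

end Part

section Pet

variable {N : ℕ}

lemma petIso_translate {S : Set (Fin N → ℤ)} (hS : BP S) (t : Fin N → ℤ) :
    PetIsomorphic S ((fun x => t + x) '' S) := by
  obtain ⟨n, δ, c, hd, rfl⟩ := hS
  refine ⟨fun x => t + x, ⟨⟨Set.range (fun a => Box (δ a) (c a)), Set.finite_range _,
    ?_, ?_, ?_, ?_⟩, ?_, rfl⟩⟩
  · rintro L ⟨a, rfl⟩
    exact box_isOrthant _ _
  · rw [Set.sUnion_range]
  · rintro L ⟨a, rfl⟩ L' ⟨b, rfl⟩ hne
    have hab : a ≠ b := fun h => hne (by rw [h])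
    exact Set.disjoint_left.mpr (fun {x} hx hx' => hd a b hab x hx hx')
  · rintro L ⟨a, rfl⟩
    exact ⟨t, fun x _ => rfl⟩
  · intro x _ y _ hxy
    have : ∀ i, t i + x i = t i + y i := fun i => congrFun hxy i
    funext i
    have := this i
    omega

lemma petIso_refl {S : Set (Fin N → ℤ)} (hS : BP S) : PetIsomorphic S S := by
  have h := petIso_translate hS 0
  have heq : (fun x : Fin N → ℤ => 0 + x) '' S = S := by
    simp
  rwa [heq] at h

lemma petIso_trans {S T U : Set (Fin N → ℤ)} (h1 : PetIsomorphic S T)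
    (h2 : PetIsomorphic T U) : PetIsomorphic S U := by
  classical
  obtain ⟨f, ⟨𝓛, h𝓛fin, h𝓛orth, hScov, h𝓛dis, h𝓛tr⟩, hfinj, hfim⟩ := h1
  obtain ⟨g, ⟨𝓜, h𝓜fin, h𝓜orth, hTcov, h𝓜dis, h𝓜tr⟩, hginj, hgim⟩ := h2
  have hpart : ∀ L M : Set (Fin N → ℤ), ∃ P : Set (Set (Fin N → ℤ)),
      L ∈ 𝓛 → M ∈ 𝓜 → (P.Finite ∧ (∀ Q ∈ P, IsOrthant Q) ∧ ⋃₀ P = L ∩ f ⁻¹' M ∧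
        P.PairwiseDisjoint id) := by
    intro L M
    by_cases hL : L ∈ 𝓛
    · by_cases hM : M ∈ 𝓜
      · obtain ⟨kL, hkL⟩ := h𝓛orth L hL
        obtain ⟨δL, cL, hLeq, _⟩ := orthant_eq_box hkL
        obtain ⟨kM, hkM⟩ := h𝓜orth M hM
        obtain ⟨δM, cM, hMeq, _⟩ := orthant_eq_box hkM
        obtain ⟨τ, hτ⟩ := h𝓛tr L hL
        have hbp : BP (L ∩ f ⁻¹' M) := by
          have heq : L ∩ f ⁻¹' M = Box δL cL ∩ Box δM (fun j => cM j - τ j) := by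
            ext x
            simp only [Set.mem_inter_iff, Set.mem_preimage]
            constructor
            · rintro ⟨hxL, hxM⟩
              rw [hτ x hxL, hMeq] at hxM
              refine ⟨by rwa [hLeq] at hxL, fun j => ?_⟩
              have := hxM j
              simp only [Pi.add_apply] at this
              exact mem_ival_add.mp this
            · rintro ⟨hxL, hxM⟩
              have hxL' : x ∈ L := by rwa [hLeq]
              refine ⟨hxL', ?_⟩
              rw [hτ x hxL', hMeq]
              intro j
              simp only [Pi.add_apply]
              exact mem_ival_add.mpr (hxM j)
          rw [heq]
          exact BP_box_inter_box _ _ _ _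
        obtain ⟨n, δ, c, hd, hU⟩ := hbp
        refine ⟨Set.range (fun a => Box (δ a) (c a)), fun _ _ => ⟨Set.finite_range _,
          ?_, ?_, ?_⟩⟩
        · rintro Q ⟨a, rfl⟩
          exact box_isOrthant _ _
        · rw [Set.sUnion_range, ← hU]
        · rintro Q ⟨a, rfl⟩ Q' ⟨b, rfl⟩ hne
          have hab : a ≠ b := fun h => hne (by rw [h])
          exact Set.disjoint_left.mpr (fun {x} hx hx' => hd a b hab x hx hx')
      · exact ⟨∅, fun _ hM' => absurd hM' hM⟩
    · exact ⟨∅, fun hL' => absurd hL' hL⟩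
  choose P hP using hpart
  refine ⟨g ∘ f, ⟨⋃ L ∈ 𝓛, ⋃ M ∈ 𝓜, P L M, ?_, ?_, ?_, ?_, ?_⟩, ?_, ?_⟩
  · exact h𝓛fin.biUnion (fun L hL => h𝓜fin.biUnion (fun M hM => (hP L M hL hM).1))
  · intro Q hQ
    simp only [Set.mem_iUnion] at hQ
    obtain ⟨L, hL, M, hM, hQ⟩ := hQ
    exact (hP L M hL hM).2.1 Q hQ
  · ext x
    simp only [Set.mem_sUnion, Set.mem_iUnion]
    constructor
    · intro hx
      have hxL : ∃ L ∈ 𝓛, x ∈ L := by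
        have : x ∈ ⋃₀ 𝓛 := by rwa [← hScov]
        exact this
      obtain ⟨L, hL, hxL⟩ := hxL
      have hfx : f x ∈ T := by
        rw [← hfim]
        exact Set.mem_image_of_mem f hx
      have hfxM : ∃ M ∈ 𝓜, f x ∈ M := by
        rw [hTcov] at hfx
        exact hfx
      obtain ⟨M, hM, hfxM⟩ := hfxM
      have : x ∈ ⋃₀ P L M := by
        rw [(hP L M hL hM).2.2.1]
        exact ⟨hxL, hfxM⟩
      obtain ⟨Q, hQ, hxQ⟩ := this
      exact ⟨Q, ⟨L, hL, M, hM, hQ⟩, hxQ⟩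
    · rintro ⟨Q, ⟨L, hL, M, hM, hQ⟩, hxQ⟩
      have : x ∈ ⋃₀ P L M := ⟨Q, hQ, hxQ⟩
      rw [(hP L M hL hM).2.2.1] at this
      rw [hScov]
      exact ⟨L, hL, this.1⟩
  · intro Q hQ Q' hQ' hne
    simp only [Set.mem_iUnion] at hQ hQ'
    obtain ⟨L, hL, M, hM, hQ⟩ := hQ
    obtain ⟨L', hL', M', hM', hQ'⟩ := hQ'
    have hQsub : Q ⊆ L ∩ f ⁻¹' M := by
      rw [← (hP L M hL hM).2.2.1]
      exact Set.subset_sUnion_of_mem hQ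
    have hQ'sub : Q' ⊆ L' ∩ f ⁻¹' M' := by
      rw [← (hP L' M' hL' hM').2.2.1]
      exact Set.subset_sUnion_of_mem hQ'
    by_cases hLL : L = L'
    · subst hLL
      by_cases hMM : M = M'
      · subst hMM
        exact (hP L M hL hM).2.2.2 hQ hQ' hne
      · refine Set.disjoint_left.mpr (fun {x} hx hx' => ?_)
        have h1 := hQsub hx
        have h2 := hQ'sub hx'
        exact Set.disjoint_left.mp (h𝓜dis hM hM' hMM) h1.2 h2.2
    · refine Set.disjoint_left.mpr (fun {x} hx hx' => ?_)
      exact Set.disjoint_left.mp (h𝓛dis hL hL' hLL) (hQsub hx).1 (hQ'sub hx').1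
  · intro Q hQ
    simp only [Set.mem_iUnion] at hQ
    obtain ⟨L, hL, M, hM, hQ⟩ := hQ
    have hQsub : Q ⊆ L ∩ f ⁻¹' M := by
      rw [← (hP L M hL hM).2.2.1]
      exact Set.subset_sUnion_of_mem hQ
    obtain ⟨τ, hτ⟩ := h𝓛tr L hL
    obtain ⟨σ, hσ⟩ := h𝓜tr M hM
    refine ⟨σ + τ, fun x hx => ?_⟩
    have hxQ := hQsub hx
    have h1 : f x = τ + x := hτ x hxQ.1
    have h2 : g (f x) = σ + f x := hσ (f x) hxQ.2
    rw [Function.comp_apply, h2, h1, add_assoc]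
  · have hmap : Set.MapsTo f S T := by
      rw [← hfim]
      exact Set.mapsTo_image f S
    exact Set.InjOn.comp hginj hfinj hmap
  · rw [Set.image_comp, hfim, hgim]

lemma petIso_glue {r : ℕ} (Sf Tf : Fin r → Set (Fin N → ℤ))
    (h : ∀ j, PetIsomorphic (Sf j) (Tf j))
    (hSd : ∀ j j', j ≠ j' → ∀ x, x ∈ Sf j → x ∉ Sf j')
    (hTd : ∀ j j', j ≠ j' → ∀ x, x ∈ Tf j → x ∉ Tf j') :
    PetIsomorphic (⋃ j, Sf j) (⋃ j, Tf j) := by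
  classical
  choose f hf using h
  set F : (Fin N → ℤ) → (Fin N → ℤ) :=
    fun x => if h : ∃ j, x ∈ Sf j then f h.choose x else x with hF
  have hFeq : ∀ j, ∀ x ∈ Sf j, F x = f j x := by
    intro j x hx
    have hex : ∃ j', x ∈ Sf j' := ⟨j, hx⟩
    have hch : hex.choose = j := by
      by_contra hne
      exact hSd _ _ hne x hex.choose_spec hx
    simp only [hF, dif_pos hex, hch]
  choose 𝓛 h1 h2 h3 h4 h5 using fun j => (hf j).1
  have himg : ∀ j, f j '' Sf j = Tf j := fun j => (hf j).2.2
  refine ⟨F, ⟨⋃ j, 𝓛 j, Set.finite_iUnion (fun j => h1 j), ?_, ?_, ?_, ?_⟩, ?_, ?_⟩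
  · intro Q hQ
    simp only [Set.mem_iUnion] at hQ
    obtain ⟨j, hQ⟩ := hQ
    exact h2 j Q hQ
  · ext x
    simp only [Set.mem_sUnion, Set.mem_iUnion]
    constructor
    · rintro ⟨j, hj⟩
      rw [h3 j] at hj
      obtain ⟨Q, hQ, hxQ⟩ := hj
      exact ⟨Q, ⟨j, hQ⟩, hxQ⟩
    · rintro ⟨Q, ⟨j, hQ⟩, hxQ⟩
      refine ⟨j, ?_⟩
      rw [h3 j]
      exact ⟨Q, hQ, hxQ⟩
  · intro Q hQ Q' hQ' hne
    simp only [Set.mem_iUnion] at hQ hQ'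
    obtain ⟨j, hQ⟩ := hQ
    obtain ⟨j', hQ'⟩ := hQ'
    by_cases hjj : j = j'
    · subst hjj
      exact h4 j hQ hQ' hne
    · refine Set.disjoint_left.mpr (fun {x} hx hx' => ?_)
      have hxS : x ∈ Sf j := by
        rw [h3 j]
        exact ⟨Q, hQ, hx⟩
      have hxS' : x ∈ Sf j' := by
        rw [h3 j']
        exact ⟨Q', hQ', hx'⟩
      exact hSd j j' hjj x hxS hxS'
  · intro Q hQ
    simp only [Set.mem_iUnion] at hQ
    obtain ⟨j, hQ⟩ := hQ
    obtain ⟨τ, hτ⟩ := h5 j Q hQ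
    refine ⟨τ, fun x hx => ?_⟩
    have hxS : x ∈ Sf j := by
      rw [h3 j]
      exact ⟨Q, hQ, hx⟩
    rw [hFeq j x hxS]
    exact hτ x hx
  · intro x hx y hy hxy
    simp only [Set.mem_iUnion] at hx hy
    obtain ⟨j, hx⟩ := hx
    obtain ⟨j', hy⟩ := hy
    rw [hFeq j x hx, hFeq j' y hy] at hxy
    by_cases hjj : j = j'
    · subst hjj
      exact (hf j).2.1 hx hy hxy
    · exfalso
      have h1' : f j x ∈ Tf j := by
        rw [← himg j]
        exact Set.mem_image_of_mem _ hx
      have h2' : f j' y ∈ Tf j' := by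
        rw [← himg j']
        exact Set.mem_image_of_mem _ hy
      rw [hxy] at h1'
      exact hTd j j' hjj _ h1' h2'
  · ext y
    simp only [Set.mem_image, Set.mem_iUnion]
    constructor
    · rintro ⟨x, ⟨j, hx⟩, rfl⟩
      refine ⟨j, ?_⟩
      rw [hFeq j x hx, ← himg j]
      exact Set.mem_image_of_mem _ hx
    · rintro ⟨j, hy⟩
      rw [← himg j] at hy
      obtain ⟨x, hx, rfl⟩ := hy
      exact ⟨x, ⟨j, hx⟩, hFeq j x hx⟩

end Pet

section Absorb

variable {N : ℕ}

/-- direction order: `δ ≤ ε` coordinatewise, with `none ≤ anything`. -/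
def dle (δ ε : Fin N → Option Bool) : Prop := ∀ i, δ i = none ∨ δ i = ε i

lemma petIso_glue2 {A B A' B' : Set (Fin N → ℤ)} (h1 : PetIsomorphic A A')
    (h2 : PetIsomorphic B B') (hS : ∀ x, x ∈ A → x ∉ B)
    (hT : ∀ x, x ∈ A' → x ∉ B') : PetIsomorphic (A ∪ B) (A' ∪ B') := by
  classical
  have hun : ∀ (X Y : Set (Fin N → ℤ)),
      (⋃ j : Fin 2, if j = 0 then X else Y) = X ∪ Y := by
    intro X Y
    ext x
    simp only [Set.mem_iUnion, Set.mem_union]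
    constructor
    · rintro ⟨j, hj⟩
      by_cases h : j = 0
      · left; simpa [h] using hj
      · right; simpa [h] using hj
    · rintro (h | h)
      · exact ⟨0, by simpa⟩
      · exact ⟨1, by simpa⟩
  have := petIso_glue (fun j : Fin 2 => if j = 0 then A else B)
    (fun j : Fin 2 => if j = 0 then A' else B') ?_ ?_ ?_
  · rwa [hun, hun] at this
  · intro j
    by_cases h : j = 0 <;> simp [h, h1, h2]
  · intro j j' hne x hx hx'
    by_cases h : j = 0
    · have h' : j' ≠ 0 := fun hc => hne (by rw [h, hc])
      simp only [h, if_pos rfl] at hx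
      simp only [if_neg h'] at hx'
      exact hS x hx hx'
    · have h' : j' = 0 := by omega
      simp only [if_neg h] at hx
      simp only [h', if_pos rfl] at hx'
      exact hS x hx' hx
  · intro j j' hne x hx hx'
    by_cases h : j = 0
    · have h' : j' ≠ 0 := fun hc => hne (by rw [h, hc])
      simp only [h, if_pos rfl] at hx
      simp only [if_neg h'] at hx'
      exact hT x hx hx'
    · have h' : j' = 0 := by omega
      simp only [if_neg h] at hx
      simp only [h', if_pos rfl] at hx'
      exact hT x hx' hx

lemma face_subset (δL : Fin N → Option Bool) (cL : Fin N → ℤ) (i0 : Fin N) :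
    Box (Function.update δL i0 none) cL ⊆ Box δL cL := by
  intro x hx i
  have h := hx i
  by_cases hi : i = i0
  · subst hi
    rw [Function.update_self] at h
    simp only [mem_ival_none] at h
    rw [h]
    exact self_mem_ival _ _
  · rwa [Function.update_of_ne hi] at h

lemma face_union {δL : Fin N → Option Bool} {cL : Fin N → ℤ} {i0 : Fin N} {s : Bool}
    (hs : δL i0 = some s) :
    Box (Function.update δL i0 none) cL ∪
      Box δL (cL + fun i => if i = i0 then (if s then 1 else -1) else 0) = Box δL cL := by
  ext x
  simp only [Set.mem_union, mem_box_s5]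
  constructor
  · rintro (h | h)
    · exact face_subset δL cL i0 h
    · intro i
      have hi := h i
      simp only [Pi.add_apply] at hi
      by_cases hii : i = i0
      · rw [hii] at hi ⊢
        rw [hs] at hi ⊢
        simp only [if_pos rfl] at hi
        cases s <;> simp at hi ⊢ <;> omega
      · simpa [hii] using hi
  · intro h
    by_cases hx0 : x i0 = cL i0
    · left
      intro i
      by_cases hii : i = i0
      · rw [hii, Function.update_self]
        simpa using hx0
      · rw [Function.update_of_ne hii]
        exact h i
    · right
      intro i
      simp only [Pi.add_apply]
      by_cases hii : i = i0
      · have hi := h i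
        rw [hii] at hi ⊢
        rw [hs] at hi ⊢
        simp only [if_pos rfl]
        cases s <;> simp at hi ⊢ <;> omega
      · simpa [hii] using h i

lemma face_disj {δL : Fin N → Option Bool} {cL : Fin N → ℤ} {i0 : Fin N} {s : Bool}
    (hs : δL i0 = some s) :
    ∀ x, x ∈ Box (Function.update δL i0 none) cL →
      x ∉ Box δL (cL + fun i => if i = i0 then (if s then 1 else -1) else 0) := by
  intro x hx hx'
  have h1 := hx i0
  rw [Function.update_self] at h1
  simp only [mem_ival_none] at h1
  have h2 := hx' i0
  simp only [Pi.add_apply, if_pos rfl, hs] at h2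
  cases s <;> simp at h2 <;> omega

lemma petIso_absorb_aux : ∀ (d : ℕ) {N : ℕ} (δB δL : Fin N → Option Bool)
    (cB cL : Fin N → ℤ),
    (Finset.univ.filter (fun i => δB i ≠ δL i)).card = d → dle δB δL → δB ≠ δL →
    (∀ x, x ∈ Box δB cB → x ∉ Box δL cL) →
    PetIsomorphic (Box δB cB ∪ Box δL cL) (Box δL cL) := by
  intro d
  induction d using Nat.strong_induction_on with
  | _ d IH =>
  intro N δB δL cB cL hcard hle hne hdisj
  classical
  have hex : ∃ i0, δB i0 ≠ δL i0 := by
    by_contra hc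
    push_neg at hc
    exact hne (funext hc)
  obtain ⟨i0, hi0⟩ := hex
  have hB0 : δB i0 = none := (hle i0).resolve_right hi0
  have hL0 : ∃ s, δL i0 = some s := by
    rcases h : δL i0 with _ | s
    · exact absurd (by rw [hB0, h]) hi0
    · exact ⟨s, rfl⟩
  obtain ⟨s, hs⟩ := hL0
  have hi0mem : i0 ∈ Finset.univ.filter (fun i => δB i ≠ δL i) :=
    Finset.mem_filter.mpr ⟨Finset.mem_univ _, hi0⟩
  have hfilter : Finset.univ.filter (fun i => δB i ≠ Function.update δL i0 none i) =
      (Finset.univ.filter (fun i => δB i ≠ δL i)).erase i0 := by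
    ext i
    simp only [Finset.mem_filter, Finset.mem_univ, true_and, Finset.mem_erase]
    by_cases hi : i = i0
    · subst hi
      simp only [Function.update_self, hB0]
      tauto
    · rw [Function.update_of_ne hi]
      tauto
  have hd1 : 1 ≤ d := by
    rw [← hcard]
    exact Finset.card_pos.mpr ⟨i0, hi0mem⟩
  have hFsub : Box (Function.update δL i0 none) cL ⊆ Box δL cL := face_subset δL cL i0
  by_cases hcase : d = 1
  · -- base case: δB is the face direction
    have hBF : δB = Function.update δL i0 none := by
      have hsingle : Finset.univ.filter (fun i => δB i ≠ δL i) = {i0} := by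
        rw [hcase] at hcard
        obtain ⟨a, ha⟩ := Finset.card_eq_one.mp hcard
        rw [ha] at hi0mem ⊢
        rw [Finset.mem_singleton.mp hi0mem]
      funext i
      by_cases hi : i = i0
      · subst hi
        rw [Function.update_self, hB0]
      · rw [Function.update_of_ne hi]
        by_contra hc
        have hmem : i ∈ ({i0} : Finset (Fin N)) := by
          rw [← hsingle]
          exact Finset.mem_filter.mpr ⟨Finset.mem_univ _, hc⟩
        exact hi (Finset.mem_singleton.mp hmem)
    have h1 : PetIsomorphic (Box δB cB) (Box (Function.update δL i0 none) cL) := by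
      have htr := petIso_translate (BP_box δB cB) (cL - cB)
      rw [image_add_box] at htr
      have heq : cL - cB + cB = cL := by
        funext i
        simp
      rw [heq] at htr
      rw [← hBF]
      exact htr
    have h2 : PetIsomorphic (Box δL cL)
        (Box δL (cL + fun i => if i = i0 then (if s then (1:ℤ) else -1) else 0)) := by
      have htr := petIso_translate (BP_box δL cL)
        (fun i => if i = i0 then (if s then (1:ℤ) else -1) else 0)
      rw [image_add_box] at htr
      rwa [add_comm] at htr
    have hT' := face_disj (cL := cL) hs
    have hdisj2 : ∀ x, x ∈ Box δB cB → x ∉ Box δL cL := hdisj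
    have hglue := petIso_glue2 h1 h2 hdisj2 hT'
    rwa [face_union hs] at hglue
  · -- inductive case
    have hcard' : (Finset.univ.filter
        (fun i => δB i ≠ Function.update δL i0 none i)).card = d - 1 := by
      rw [hfilter, Finset.card_erase_of_mem hi0mem, hcard]
    have hle' : dle δB (Function.update δL i0 none) := by
      intro i
      by_cases hi : i = i0
      · subst hi
        left
        exact hB0
      · rw [Function.update_of_ne hi]
        exact hle i
    have hne' : δB ≠ Function.update δL i0 none := by
      intro hc
      have hzero : (Finset.univ.filter
          (fun i => δB i ≠ Function.update δL i0 none i)).card = 0 := by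
        rw [Finset.card_eq_zero, Finset.filter_eq_empty_iff]
        intro i _
        rw [hc]
        simp
      omega
    have hdisj' : ∀ x, x ∈ Box δB cB → x ∉ Box (Function.update δL i0 none) cL :=
      fun x hx hx' => hdisj x hx (hFsub hx')
    have ψ : PetIsomorphic (Box δB cB ∪ Box (Function.update δL i0 none) cL)
        (Box (Function.update δL i0 none) cL) :=
      IH (d - 1) (by omega) δB (Function.update δL i0 none) cB cL hcard' hle' hne' hdisj'
    have hid : PetIsomorphic
        (Box δL (cL + fun i => if i = i0 then (if s then (1:ℤ) else -1) else 0))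
        (Box δL (cL + fun i => if i = i0 then (if s then (1:ℤ) else -1) else 0)) :=
      petIso_refl (BP_box _ _)
    have hdisjS : ∀ x, x ∈ Box δB cB ∪ Box (Function.update δL i0 none) cL →
        x ∉ Box δL (cL + fun i => if i = i0 then (if s then (1:ℤ) else -1) else 0) := by
      rintro x (hx | hx) hx'
      · have hxL : x ∈ Box δL cL := by
          rw [← face_union hs]
          right
          exact hx'
        exact hdisj x hx hxL
      · exact face_disj hs x hx hx'
    have hglue := petIso_glue2 ψ hid hdisjS (face_disj hs)
    have hsrc : (Box δB cB ∪ Box (Function.update δL i0 none) cL) ∪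
        Box δL (cL + fun i => if i = i0 then (if s then (1:ℤ) else -1) else 0) =
        Box δB cB ∪ Box δL cL := by
      rw [Set.union_assoc, face_union hs]
    have htgt : Box (Function.update δL i0 none) cL ∪
        Box δL (cL + fun i => if i = i0 then (if s then (1:ℤ) else -1) else 0) =
        Box δL cL := face_union hs
    rwa [hsrc, htgt] at hglue

lemma petIso_absorb {δB δL : Fin N → Option Bool} {cB cL : Fin N → ℤ}
    (hle : dle δB δL) (hne : δB ≠ δL)
    (hdisj : ∀ x, x ∈ Box δB cB → x ∉ Box δL cL) :
    PetIsomorphic (Box δB cB ∪ Box δL cL) (Box δL cL) :=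
  petIso_absorb_aux _ δB δL cB cL rfl hle hne hdisj

/-- union of boxes of a list of box data -/
def lUnion (l : List ((Fin N → Option Bool) × (Fin N → ℤ))) : Set (Fin N → ℤ) :=
  {x | ∃ p ∈ l, x ∈ Box p.1 p.2}

lemma lUnion_nil : lUnion ([] : List ((Fin N → Option Bool) × (Fin N → ℤ))) = ∅ := by
  ext x
  simp [lUnion]

lemma lUnion_cons (p : (Fin N → Option Bool) × (Fin N → ℤ)) (l) :
    lUnion (p :: l) = Box p.1 p.2 ∪ lUnion l := by
  ext x
  constructor
  · rintro ⟨q, hq, hx⟩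
    rcases List.mem_cons.mp hq with rfl | hq'
    · exact Or.inl hx
    · exact Or.inr ⟨q, hq', hx⟩
  · rintro (hx | ⟨q, hq, hx⟩)
    · exact ⟨p, (List.mem_cons_self (a := p) (l := l)), hx⟩
    · exact ⟨q, List.mem_cons_of_mem p hq, hx⟩

lemma BP_lUnion (l : List ((Fin N → Option Bool) × (Fin N → ℤ)))
    (hl : l.Pairwise (fun p q => ∀ x, x ∈ Box p.1 p.2 → x ∉ Box q.1 q.2)) :
    BP (lUnion l) := by
  induction l with
  | nil => rw [lUnion_nil]; exact BP_empty
  | cons p l IHl =>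
    rw [lUnion_cons]
    rw [List.pairwise_cons] at hl
    refine BP_union (BP_box _ _) (IHl hl.2) ?_
    intro x hx hx'
    rw [lUnion] at hx'
    obtain ⟨q, hq, hxq⟩ := hx'
    exact hl.1 q hq x hx hxq

lemma petIso_multi_absorb (δL : Fin N → Option Bool) (cL : Fin N → ℤ) :
    ∀ (l : List ((Fin N → Option Bool) × (Fin N → ℤ))),
    (∀ p ∈ l, dle p.1 δL ∧ p.1 ≠ δL ∧ ∀ x, x ∈ Box p.1 p.2 → x ∉ Box δL cL) →
    l.Pairwise (fun p q => ∀ x, x ∈ Box p.1 p.2 → x ∉ Box q.1 q.2) →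
    PetIsomorphic (lUnion l ∪ Box δL cL) (Box δL cL) := by
  intro l
  induction l with
  | nil =>
    intro _ _
    rw [lUnion_nil, Set.empty_union]
    exact petIso_refl (BP_box _ _)
  | cons p l IHl =>
    intro hall hpw
    rw [List.pairwise_cons] at hpw
    have hp := hall p ((List.mem_cons_self (a := p) (l := l)))
    have hIH : PetIsomorphic (lUnion l ∪ Box δL cL) (Box δL cL) :=
      IHl (fun q hq => hall q (List.mem_cons_of_mem p hq)) hpw.2
    have hd1 : ∀ x, x ∈ Box p.1 p.2 → x ∉ lUnion l ∪ Box δL cL := by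
      rintro x hx (hx' | hx')
      · obtain ⟨q, hq, hxq⟩ := hx'
        exact hpw.1 q hq x hx hxq
      · exact hp.2.2 x hx hx'
    have hrefl : PetIsomorphic (Box p.1 p.2) (Box p.1 p.2) := petIso_refl (BP_box _ _)
    have hglue := petIso_glue2 hrefl hIH hd1 (fun x hx hx' => hp.2.2 x hx hx')
    have habs : PetIsomorphic (Box p.1 p.2 ∪ Box δL cL) (Box δL cL) :=
      petIso_absorb hp.1 hp.2.1 hp.2.2
    have hfin : PetIsomorphic (lUnion (p :: l) ∪ Box δL cL) (Box p.1 p.2 ∪ Box δL cL) := by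
      rw [lUnion_cons, Set.union_assoc]
      exact hglue
    exact petIso_trans hfin habs

end Absorb

section Helpers

variable {N : ℕ}

lemma dle_refl (d : Fin N → Option Bool) : dle d d := fun i => Or.inr rfl

lemma dle_trans {d e f : Fin N → Option Bool} (h1 : dle d e) (h2 : dle e f) :
    dle d f := by
  intro i
  rcases h1 i with h | h
  · exact Or.inl h
  · rcases h2 i with h' | h'
    · exact Or.inl (h.trans h')
    · exact Or.inr (h.trans h')

lemma drank_mono {d e : Fin N → Option Bool} (h : dle d e) : drank d ≤ drank e := by
  apply Finset.card_le_card
  intro i hi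
  simp only [Finset.mem_filter, Finset.mem_univ, true_and] at hi ⊢
  rcases h i with h' | h'
  · exact absurd h' hi
  · rw [← h']
    exact hi

lemma dle_eq_of_rank {d e : Fin N → Option Bool} (h : dle d e)
    (hr : drank e ≤ drank d) : d = e := by
  have hsub : (Finset.univ.filter (fun i => d i ≠ none)) ⊆
      (Finset.univ.filter (fun i => e i ≠ none)) := by
    intro i hi
    simp only [Finset.mem_filter, Finset.mem_univ, true_and] at hi ⊢
    rcases h i with h' | h'
    · exact absurd h' hi
    · rw [← h']
      exact hi
  have heq : (Finset.univ.filter (fun i => d i ≠ none)) =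
      (Finset.univ.filter (fun i => e i ≠ none)) :=
    Finset.eq_of_subset_of_card_le hsub hr
  funext i
  rcases h i with h' | h'
  · rw [h']
    by_contra hc
    have hie : i ∈ Finset.univ.filter (fun i => e i ≠ none) :=
      Finset.mem_filter.mpr ⟨Finset.mem_univ _, fun hh => hc hh.symm⟩
    rw [← heq] at hie
    exact (Finset.mem_filter.mp hie).2 h'
  · exact h'

lemma ival_shift {d : Option Bool} {v c x : ℤ} :
    x ∈ ival d (v + c) ↔ x - v ∈ ival d c := by
  rcases d with _ | b
  · simp; omega
  · cases b <;> simp <;> omega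

lemma mem_box_add_left {δ : Fin N → Option Bool} {v c x : Fin N → ℤ} :
    x ∈ Box δ (v + c) ↔ x - v ∈ Box δ c := by
  constructor
  · intro hx i
    have h := hx i
    simp only [Pi.add_apply] at h
    simpa using ival_shift.mp h
  · intro hx i
    have h := hx i
    simp only [Pi.sub_apply] at h
    simp only [Pi.add_apply]
    exact ival_shift.mpr (by simpa using h)

/-- direction rigidity: a box inside a finite union of parallel boxes
has direction below the common direction. -/
lemma dir_of_subset {ε d : Fin N → Option Bool} {u : Fin N → ℤ} {r : ℕ}
    (w : Fin r → (Fin N → ℤ))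
    (hsub : Box ε u ⊆ ⋃ k, Box d (w k)) :
    ∀ i s, ε i = some s → d i = some s := by
  classical
  intro i s hi
  set sg : ℤ := if s = true then 1 else -1 with hsg
  have hsgpm : (s = true ∧ sg = 1) ∨ (s = false ∧ sg = -1) := by
    cases s
    · right
      exact ⟨rfl, by rw [hsg, if_neg Bool.false_ne_true]⟩
    · left
      exact ⟨rfl, by rw [hsg, if_pos rfl]⟩
  set pt : ℕ → (Fin N → ℤ) :=
    fun t => fun i' => if i' = i then u i + sg * t else u i' with hptdef
  have hpt : ∀ t, pt t ∈ Box ε u := by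
    intro t i'
    by_cases hii : i' = i
    · simp only [hptdef, if_pos hii]
      rw [hii, hi]
      rcases hsgpm with ⟨hs, hsg1⟩ | ⟨hs, hsg1⟩ <;> rw [hs, hsg1] <;> simp <;> omega
    · simp only [hptdef, if_neg hii]
      exact self_mem_ival _ _
  have hch : ∀ t : ℕ, ∃ k, pt t ∈ Box d (w k) :=
    fun t => Set.mem_iUnion.mp (hsub (hpt t))
  choose K hK using hch
  obtain ⟨k, hkinf⟩ := Finite.exists_infinite_fiber K
  have hub : ∀ B : ℕ, ∃ t, K t = k ∧ B ≤ t := by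
    intro B
    by_contra hc
    push_neg at hc
    have hkinf' : (K ⁻¹' {k}).Infinite := Set.infinite_coe_iff.mp hkinf
    apply hkinf'
    apply Set.Finite.subset (Set.finite_Iio B)
    intro t ht
    simp only [Set.mem_preimage, Set.mem_singleton_iff] at ht
    exact hc t ht
  have hKi : ∀ t, K t = k → u i + sg * t ∈ ival (d i) (w k i) := by
    intro t hkt
    have h := hK t i
    rw [hkt] at h
    simpa only [hptdef, if_pos rfl] using h
  rcases hd : d i with _ | s'
  · exfalso
    obtain ⟨t1, hk1, _⟩ := hub 0
    obtain ⟨t2, hk2, ht2⟩ := hub (t1 + 1)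
    have h1 := hKi t1 hk1
    have h2 := hKi t2 hk2
    rw [hd] at h1 h2
    simp only [mem_ival_none] at h1 h2
    rcases hsgpm with ⟨_, hsg1⟩ | ⟨_, hsg1⟩ <;> rw [hsg1] at h1 h2 <;> omega
  · have hss : s' = s := by
      by_contra hss
      obtain ⟨t, hkt, htB⟩ := hub ((w k i - u i).natAbs + (u i - w k i).natAbs + 1)
      have h1 := hKi t hkt
      rw [hd] at h1
      rcases hsgpm with ⟨hs, hsg1⟩ | ⟨hs, hsg1⟩
      · have hs' : s' = false := by
          cases s'
          · rfl
          · rw [hs] at hss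
            exact absurd rfl hss
        rw [hs', hsg1] at h1
        simp only [mem_ival_down] at h1
        omega
      · have hs' : s' = true := by
          cases s'
          · rw [hs] at hss
            exact absurd rfl hss
          · rfl
        rw [hs', hsg1] at h1
        simp only [mem_ival_up] at h1
        omega
    rw [hss]

end Helpers

/-- pet-normal form: every orthohedral set of rank `< N` is pet-isomorphic
to a disjoint union of stacks such that no maximal orthant of one stack is parallel to a
suborthant of another stack. -/
theorem stmt5 {N : ℕ} (S : Set (Fin N → ℤ)) (hS : IsOrthohedral S)
    (hrk : orthRank S < N) :
    ∃ (m : ℕ) (St : Fin m → Set (Fin N → ℤ)) (n h : Fin m → ℕ),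
      (∀ j, IsStack (St j) (n j) (h j)) ∧
      (Pairwise fun j j' => Disjoint (St j) (St j')) ∧
      PetIsomorphic S (⋃ j, St j) ∧
      (∀ j j', j ≠ j' → ∀ L, IsOrthantOfRank L (n j) → L ⊆ St j →
        ¬ ∃ L', IsOrthant L' ∧ L' ⊆ St j' ∧ ParallelOrthants L L') := by
  classical
  clear hrk
  obtain ⟨nB, δ, c, hdisj, hSeq⟩ := BP_of_orthohedral hS
  -- the finite set of directions present, and its maximal elements
  set D : Finset (Fin N → Option Bool) := Finset.univ.image δ with hD
  set M : Finset (Fin N → Option Bool) :=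
    D.filter (fun d => ∀ e ∈ D, dle d e → e = d) with hM
  have hMD : M ⊆ D := Finset.filter_subset _ _
  have hMmax : ∀ d ∈ M, ∀ e ∈ D, dle d e → e = d := fun d hd => (Finset.mem_filter.mp hd).2
  have hmaxex : ∀ d ∈ D, ∃ e ∈ M, dle d e := by
    intro d hd
    obtain ⟨e, he, hemax⟩ := Finset.exists_max_image (D.filter (fun e => dle d e)) drank
      ⟨d, Finset.mem_filter.mpr ⟨hd, dle_refl d⟩⟩
    rw [Finset.mem_filter] at he
    refine ⟨e, ?_, he.2⟩
    rw [hM, Finset.mem_filter]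
    refine ⟨he.1, fun f hf hef => ?_⟩
    have hdf : dle d f := dle_trans he.2 hef
    have hfmem : f ∈ D.filter (fun e => dle d e) := Finset.mem_filter.mpr ⟨hf, hdf⟩
    exact (dle_eq_of_rank hef (hemax f hfmem)).symm
  -- enumeration of the maximal directions
  set m := M.card with hm
  have hcardM : Fintype.card {d // d ∈ M} = m := Fintype.card_coe M
  set eM : {d // d ∈ M} ≃ Fin m := (Fintype.equivFin _).trans (finCongr hcardM) with heM
  set dir : Fin m → (Fin N → Option Bool) := fun j => (eM.symm j).1 with hdir
  have hdirM : ∀ j, dir j ∈ M := fun j => (eM.symm j).2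
  have hdirinj : Function.Injective dir := by
    intro j j' hjj
    have h1 : eM.symm j = eM.symm j' := Subtype.ext hjj
    exact eM.symm.injective h1
  have hdirsurj : ∀ d ∈ M, ∃ j, dir j = d := by
    intro d hd
    refine ⟨eM ⟨d, hd⟩, ?_⟩
    show ((eM.symm (eM ⟨d, hd⟩)) : Fin N → Option Bool) = d
    rw [Equiv.symm_apply_apply]
  -- assignment of each piece to a maximal direction above it
  have hδD : ∀ a, δ a ∈ D := fun a => Finset.mem_image_of_mem δ (Finset.mem_univ a)
  have hαex : ∀ a : Fin nB, ∃ j : Fin m, dle (δ a) (dir j) := by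
    intro a
    obtain ⟨e, heM', hde⟩ := hmaxex (δ a) (hδD a)
    obtain ⟨j, rfl⟩ := hdirsurj e heM'
    exact ⟨j, hde⟩
  choose α hα using hαex
  have hlayfix : ∀ a, δ a ∈ M → dir (α a) = δ a := by
    intro a ha
    exact hMmax (δ a) ha (dir (α a)) (hMD (hdirM _)) (hα a)
  have hlayα : ∀ a j, δ a = dir j → α a = j := by
    intro a j haj
    have h1 : dir (α a) = δ a := hlayfix a (by rw [haj]; exact hdirM j)
    exact hdirinj (by rw [h1, haj])
  -- corner bound and separating translations
  set Cb : ℕ := Finset.univ.sup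
    (fun a : Fin nB => Finset.univ.sup (fun i => (c a i).natAbs)) with hCb
  have hCbb : ∀ a i, (c a i).natAbs ≤ Cb := by
    intro a i
    calc (c a i).natAbs ≤ Finset.univ.sup (fun i => (c a i).natAbs) :=
          Finset.le_sup (f := fun i => (c a i).natAbs) (Finset.mem_univ i)
    _ ≤ Cb := Finset.le_sup (f := fun a => Finset.univ.sup (fun i => (c a i).natAbs))
          (Finset.mem_univ a)
  set tv : Fin m → Fin N → ℤ := fun j i =>
    if dir j i = some true then (2*(Cb:ℤ)+1)
    else if dir j i = some false then -(2*(Cb:ℤ)+1) else 0 with htv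
  have htv_true : ∀ j i, dir j i = some true → tv j i = 2*(Cb:ℤ)+1 := by
    intro j i h
    simp [htv, h]
  have htv_false : ∀ j i, dir j i = some false → tv j i = -(2*(Cb:ℤ)+1) := by
    intro j i h
    simp [htv, h]
  have htv_none : ∀ j i, dir j i = none → tv j i = 0 := by
    intro j i h
    simp [htv, h]
  -- layers of each stack
  set lay : Fin m → Finset (Fin nB) := fun j => Finset.univ.filter (fun a => δ a = dir j)
    with hlay
  set hh : Fin m → ℕ := fun j => (lay j).card with hhh
  have hcardlay : ∀ j, Fintype.card {a // a ∈ lay j} = hh j := fun j => Fintype.card_coe _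
  set eL : ∀ j, {a // a ∈ lay j} ≃ Fin (hh j) :=
    fun j => (Fintype.equivFin _).trans (finCongr (hcardlay j)) with heL
  set enum : ∀ j, Fin (hh j) → Fin nB := fun j i => ((eL j).symm i).1 with henum
  have henum_mem : ∀ j i, enum j i ∈ lay j := fun j i => ((eL j).symm i).2
  have henum_dir : ∀ j i, δ (enum j i) = dir j :=
    fun j i => (Finset.mem_filter.mp (henum_mem j i)).2
  have henum_inj : ∀ j, Function.Injective (enum j) :=
    fun j i i' h => (eL j).symm.injective (Subtype.ext h)
  have henum_surj : ∀ j, ∀ a ∈ lay j, ∃ i, enum j i = a := by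
    intro j a ha
    refine ⟨eL j ⟨a, ha⟩, ?_⟩
    show (((eL j).symm ((eL j) ⟨a, ha⟩)).1 : Fin nB) = a
    rw [Equiv.symm_apply_apply]
  -- the stacks
  set St : Fin m → Set (Fin N → ℤ) :=
    fun j => ⋃ i : Fin (hh j), Box (dir j) (tv j + c (enum j i)) with hSt
  have mem_St : ∀ j x, x ∈ St j ↔ ∃ a ∈ lay j, x ∈ Box (dir j) (tv j + c a) := by
    intro j x
    simp only [hSt, Set.mem_iUnion]
    constructor
    · rintro ⟨i, hi⟩
      exact ⟨enum j i, henum_mem j i, hi⟩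
    · rintro ⟨a, ha, hx⟩
      obtain ⟨i, rfl⟩ := henum_surj j a ha
      exact ⟨i, hx⟩
  -- stacks are pairwise disjoint
  have hStdisj : ∀ j j', j ≠ j' → ∀ x, x ∈ St j → x ∉ St j' := by
    intro j j' hjj x hx hx'
    obtain ⟨a, _, hxa⟩ := (mem_St j x).mp hx
    obtain ⟨b, _, hxb⟩ := (mem_St j' x).mp hx'
    have hndle : ¬ dle (dir j) (dir j') := by
      intro hd
      exact hjj (hdirinj (hMmax (dir j) (hdirM j) (dir j') (hMD (hdirM j')) hd)).symm
    have hex : ∃ i, dir j i ≠ none ∧ dir j i ≠ dir j' i := by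
      by_contra hc
      push_neg at hc
      apply hndle
      intro i
      by_cases hni : dir j i = none
      · exact Or.inl hni
      · exact Or.inr (hc i hni)
    obtain ⟨i0, hi0n, hi0e⟩ := hex
    have hxa0 := hxa i0
    have hxb0 := hxb i0
    simp only [Pi.add_apply] at hxa0 hxb0
    have hca := hCbb a i0
    have hcb := hCbb b i0
    have hbound : ∀ (e : Fin nB), (c e i0).natAbs ≤ Cb → -(Cb:ℤ) ≤ c e i0 ∧ c e i0 ≤ Cb := by
      intro e he
      omega
    obtain ⟨hca1, hca2⟩ := hbound a hca
    obtain ⟨hcb1, hcb2⟩ := hbound b hcb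
    rcases hdj : dir j i0 with _ | sb
    · exact hi0n hdj
    · rcases hdj' : dir j' i0 with _ | sb'
      · have ht1 := htv_none j' i0 hdj'
        rw [hdj'] at hxb0
        simp only [mem_ival_none] at hxb0
        cases sb
        · have ht2 := htv_false j i0 hdj
          rw [hdj] at hxa0
          simp only [mem_ival_down] at hxa0
          omega
        · have ht2 := htv_true j i0 hdj
          rw [hdj] at hxa0
          simp only [mem_ival_up] at hxa0
          omega
      · cases sb
        · cases sb'
          · exact hi0e (by rw [hdj, hdj'])
          · have ht1 := htv_false j i0 hdj
            have ht2 := htv_true j' i0 hdj'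
            rw [hdj] at hxa0
            rw [hdj'] at hxb0
            simp only [mem_ival_down] at hxa0
            simp only [mem_ival_up] at hxb0
            omega
        · cases sb'
          · have ht1 := htv_true j i0 hdj
            have ht2 := htv_false j' i0 hdj'
            rw [hdj] at hxa0
            rw [hdj'] at hxb0
            simp only [mem_ival_up] at hxa0
            simp only [mem_ival_down] at hxb0
            omega
          · exact hi0e (by rw [hdj, hdj'])
  -- domains
  set Dom : Fin m → Set (Fin N → ℤ) :=
    fun j => ⋃ a ∈ Finset.univ.filter (fun a => α a = j), Box (δ a) (c a) with hDom
  have mem_Dom : ∀ j x, x ∈ Dom j ↔ ∃ a, α a = j ∧ x ∈ Box (δ a) (c a) := by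
    intro j x
    simp only [hDom, Set.mem_iUnion, Finset.mem_filter, Finset.mem_univ, true_and]
    constructor
    · rintro ⟨a, ha, hx⟩
      exact ⟨a, ha, hx⟩
    · rintro ⟨a, ha, hx⟩
      exact ⟨a, ha, hx⟩
  have hSrc : ⋃ j, Dom j = S := by
    rw [hSeq]
    ext x
    simp only [Set.mem_iUnion]
    constructor
    · rintro ⟨j, hj⟩
      obtain ⟨a, _, hx⟩ := (mem_Dom j x).mp hj
      exact ⟨a, hx⟩
    · rintro ⟨a, hx⟩
      exact ⟨α a, (mem_Dom _ x).mpr ⟨a, rfl, hx⟩⟩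
  have hDomdisj : ∀ j j', j ≠ j' → ∀ x, x ∈ Dom j → x ∉ Dom j' := by
    intro j j' hjj x hx hx'
    obtain ⟨a, ha, hxa⟩ := (mem_Dom j x).mp hx
    obtain ⟨b, hb, hxb⟩ := (mem_Dom j' x).mp hx'
    have hab : a ≠ b := fun h => hjj (by rw [← ha, ← hb, h])
    exact hdisj a b hab x hxa hxb
  -- per-stack pet isomorphism
  have hstack : ∀ j, PetIsomorphic (Dom j) (St j) := by
    intro j
    have hlayne : (lay j).Nonempty := by
      have hmemD : dir j ∈ D := hMD (hdirM j)
      rw [hD] at hmemD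
      obtain ⟨a, _, ha⟩ := Finset.mem_image.mp hmemD
      exact ⟨a, Finset.mem_filter.mpr ⟨Finset.mem_univ _, ha⟩⟩
    obtain ⟨a0, ha0⟩ := hlayne
    have ha0d : δ a0 = dir j := (Finset.mem_filter.mp ha0).2
    set Abs : Finset (Fin nB) := Finset.univ.filter (fun a => α a = j ∧ δ a ≠ dir j)
      with hAbs
    set Al : List ((Fin N → Option Bool) × (Fin N → ℤ)) :=
      Abs.toList.map (fun a => (δ a, c a)) with hAl
    have hAl_mem : ∀ p ∈ Al, ∃ a ∈ Abs, p = (δ a, c a) := by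
      intro p hp
      rw [hAl, List.mem_map] at hp
      obtain ⟨a, ha, rfl⟩ := hp
      exact ⟨a, Finset.mem_toList.mp ha, rfl⟩
    have f1 : PetIsomorphic (lUnion Al ∪ Box (dir j) (c a0)) (Box (dir j) (c a0)) := by
      apply petIso_multi_absorb
      · intro p hp
        obtain ⟨a, haAbs, rfl⟩ := hAl_mem p hp
        rw [hAbs, Finset.mem_filter] at haAbs
        obtain ⟨-, hαa, hne⟩ := haAbs
        refine ⟨hαa ▸ hα a, hne, ?_⟩
        intro x hx hx'
        have hab : a ≠ a0 := fun h => hne (by rw [h, ha0d])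
        exact hdisj a a0 hab x hx (by rw [ha0d]; exact hx')
      · rw [hAl, List.pairwise_map]
        exact List.Pairwise.imp
          (fun {a b} hab => fun x hx hx' => hdisj a b hab x hx hx') Abs.nodup_toList
    set Oth : Set (Fin N → ℤ) := ⋃ a ∈ (lay j).erase a0, Box (δ a) (c a) with hOth
    have mem_Oth : ∀ x, x ∈ Oth ↔ ∃ b, (b ≠ a0 ∧ b ∈ lay j) ∧ x ∈ Box (δ b) (c b) := by
      intro x
      simp only [hOth, Set.mem_iUnion, Finset.mem_erase]
      constructor
      · rintro ⟨b, hb, hx⟩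
        exact ⟨b, hb, hx⟩
      · rintro ⟨b, hb, hx⟩
        exact ⟨b, hb, hx⟩
    have hOthBP : BP Oth := by
      apply BP_of_family (ι := {a : Fin nB // a ∈ (lay j).erase a0})
        (δ := fun a => δ a.1) (c := fun a => c a.1)
      · intro a b hab x hx hx'
        exact hdisj a.1 b.1 (fun h => hab (Subtype.ext h)) x hx hx'
      · ext x
        simp only [hOth, Set.mem_iUnion]
        constructor
        · rintro ⟨a, ha, hx⟩
          exact ⟨⟨a, ha⟩, hx⟩
        · rintro ⟨⟨a, ha⟩, hx⟩
          exact ⟨a, ha, hx⟩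
    have f2 : PetIsomorphic ((lUnion Al ∪ Box (dir j) (c a0)) ∪ Oth)
        (Box (dir j) (c a0) ∪ Oth) := by
      apply petIso_glue2 f1 (petIso_refl hOthBP)
      · rintro x (hx | hx) hx'
        · obtain ⟨p, hp, hxp⟩ := hx
          obtain ⟨a, haAbs, rfl⟩ := hAl_mem p hp
          rw [hAbs, Finset.mem_filter] at haAbs
          obtain ⟨b, hb, hxb⟩ := (mem_Oth x).mp hx'
          have hab : a ≠ b := by
            intro h
            rw [h] at haAbs
            exact haAbs.2.2 (Finset.mem_filter.mp hb.2).2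
          exact hdisj a b hab x hxp hxb
        · obtain ⟨b, hb, hxb⟩ := (mem_Oth x).mp hx'
          have hab : a0 ≠ b := fun h => hb.1 h.symm
          exact hdisj a0 b hab x (by rw [← ha0d] at hx; exact hx) hxb
      · intro x hx hx'
        obtain ⟨b, hb, hxb⟩ := (mem_Oth x).mp hx'
        have hab : a0 ≠ b := fun h => hb.1 h.symm
        exact hdisj a0 b hab x (by rw [← ha0d] at hx; exact hx) hxb
    have hsrc_eq : (lUnion Al ∪ Box (dir j) (c a0)) ∪ Oth = Dom j := by
      ext x
      constructor
      · rintro ((hx | hx) | hx)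
        · obtain ⟨p, hp, hxp⟩ := hx
          obtain ⟨a, haAbs, rfl⟩ := hAl_mem p hp
          rw [hAbs, Finset.mem_filter] at haAbs
          exact (mem_Dom j x).mpr ⟨a, haAbs.2.1, hxp⟩
        · exact (mem_Dom j x).mpr ⟨a0, hlayα a0 j ha0d, by rw [ha0d]; exact hx⟩
        · obtain ⟨b, hb, hxb⟩ := (mem_Oth x).mp hx
          have hbd : δ b = dir j := (Finset.mem_filter.mp hb.2).2
          exact (mem_Dom j x).mpr ⟨b, hlayα b j hbd, hxb⟩
      · intro hx
        obtain ⟨a, haα, hxa⟩ := (mem_Dom j x).mp hx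
        by_cases hd : δ a = dir j
        · by_cases haa0 : a = a0
          · subst haa0
            exact Or.inl (Or.inr (by rw [← hd]; exact hxa))
          · refine Or.inr ((mem_Oth x).mpr ⟨a, ⟨haa0, ?_⟩, hxa⟩)
            exact Finset.mem_filter.mpr ⟨Finset.mem_univ _, hd⟩
        · refine Or.inl (Or.inl ⟨(δ a, c a), ?_, hxa⟩)
          rw [hAl, List.mem_map]
          exact ⟨a, Finset.mem_toList.mpr
            (Finset.mem_filter.mpr ⟨Finset.mem_univ _, haα, hd⟩), rfl⟩
    set Lay : Set (Fin N → ℤ) := ⋃ a ∈ lay j, Box (dir j) (c a) with hLay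
    have mem_Lay : ∀ x, x ∈ Lay ↔ ∃ b ∈ lay j, x ∈ Box (dir j) (c b) := by
      intro x
      simp only [hLay, Set.mem_iUnion]
      constructor
      · rintro ⟨b, hb, hx⟩
        exact ⟨b, hb, hx⟩
      · rintro ⟨b, hb, hx⟩
        exact ⟨b, hb, hx⟩
    have htgt_eq : Box (dir j) (c a0) ∪ Oth = Lay := by
      ext x
      constructor
      · rintro (hx | hx)
        · exact (mem_Lay x).mpr ⟨a0, ha0, hx⟩
        · obtain ⟨b, hb, hxb⟩ := (mem_Oth x).mp hx
          have hbd : δ b = dir j := (Finset.mem_filter.mp hb.2).2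
          exact (mem_Lay x).mpr ⟨b, hb.2, by rw [← hbd]; exact hxb⟩
      · intro hx
        obtain ⟨b, hb, hxb⟩ := (mem_Lay x).mp hx
        by_cases hba0 : b = a0
        · subst hba0
          exact Or.inl hxb
        · have hbd : δ b = dir j := (Finset.mem_filter.mp hb).2
          exact Or.inr ((mem_Oth x).mpr ⟨b, ⟨hba0, hb⟩, by rw [hbd]; exact hxb⟩)
    have hLayBP : BP Lay := by
      apply BP_of_family (ι := {a : Fin nB // a ∈ lay j})
        (δ := fun _ => dir j) (c := fun a => c a.1)
      · intro a b hab x hx hx'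
        have hda : δ a.1 = dir j := (Finset.mem_filter.mp a.2).2
        have hdb : δ b.1 = dir j := (Finset.mem_filter.mp b.2).2
        refine hdisj a.1 b.1 (fun h => hab (Subtype.ext h)) x ?_ ?_
        · rw [hda]
          exact hx
        · rw [hdb]
          exact hx'
      · ext x
        rw [mem_Lay]
        simp only [Set.mem_iUnion]
        constructor
        · rintro ⟨b, hb, hx⟩
          exact ⟨⟨b, hb⟩, hx⟩
        · rintro ⟨⟨b, hb⟩, hx⟩
          exact ⟨b, hb, hx⟩
    have f3 : PetIsomorphic Lay ((fun x => tv j + x) '' Lay) :=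
      petIso_translate hLayBP (tv j)
    have himg : (fun x => tv j + x) '' Lay = St j := by
      ext x
      constructor
      · rintro ⟨y, hy, rfl⟩
        obtain ⟨b, hb, hyb⟩ := (mem_Lay y).mp hy
        refine (mem_St j _).mpr ⟨b, hb, ?_⟩
        apply mem_box_add_left.mpr
        have heq : tv j + y - tv j = y := by
          funext i
          simp
        rw [heq]
        exact hyb
      · intro hx
        obtain ⟨b, hb, hxb⟩ := (mem_St j x).mp hx
        refine ⟨x - tv j, (mem_Lay _).mpr ⟨b, hb, mem_box_add_left.mp hxb⟩, ?_⟩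
        funext i
        simp
    rw [hsrc_eq, htgt_eq] at f2
    rw [himg] at f3
    exact petIso_trans f2 f3
  have hpet : PetIsomorphic S (⋃ j, St j) := by
    have hglue := petIso_glue Dom St hstack hDomdisj hStdisj
    rwa [hSrc] at hglue
  refine ⟨m, St, fun j => drank (dir j), hh, ?_, ?_, hpet, ?_⟩
  · -- stacks
    intro j
    refine ⟨Box (dir j) 0, fun i => tv j + c (enum j i), box_isOrthantOfRank _ _, ?_, ?_⟩
    · intro i i' hii
      rw [vadd_box, vadd_box]
      refine Set.disjoint_left.mpr (fun {x} hx hx' => ?_)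
      rw [add_zero] at hx hx'
      have hx2 := mem_box_add_left.mp hx
      have hx2' := mem_box_add_left.mp hx'
      refine hdisj (enum j i) (enum j i') (fun h => hii (henum_inj j h)) (x - tv j) ?_ ?_
      · rw [henum_dir j i]
        exact hx2
      · rw [henum_dir j i']
        exact hx2'
    · simp only [hSt, vadd_box, add_zero]
  · -- pairwise disjoint
    intro j j' hjj
    exact Set.disjoint_left.mpr (fun {x} hx hx' => hStdisj j j' hjj x hx hx')
  · -- normal form condition
    rintro j j' hjj L hLrank hLsub ⟨L', _, hL'sub, a, hpar⟩
    obtain ⟨ε, u, rfl, hrkε⟩ := orthant_eq_box hLrank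
    have h1 : ∀ i s, ε i = some s → dir j i = some s := by
      apply dir_of_subset (w := fun i => tv j + c (enum j i))
      simpa only [hSt] using hLsub
    have hle : dle ε (dir j) := by
      intro i
      rcases hε : ε i with _ | s
      · exact Or.inl rfl
      · exact Or.inr (by rw [h1 i s hε])
    have hεd : ε = dir j := dle_eq_of_rank hle (le_of_eq hrkε.symm)
    rw [hεd, vadd_box] at hpar
    subst hpar
    have h2 : ∀ i s, dir j i = some s → dir j' i = some s := by
      apply dir_of_subset (w := fun i => tv j' + c (enum j' i))
      simpa only [hSt] using hL'sub
    have hle2 : dle (dir j) (dir j') := by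
      intro i
      rcases hd : dir j i with _ | s
      · exact Or.inl rfl
      · exact Or.inr (by rw [h2 i s hd])
    exact hjj (hdirinj (hMmax (dir j) (hdirM j) (dir j') (hMD (hdirM j')) hle2)).symm

end PeiPaper
end
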